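/- arXiv:2106.15966 — 7 statements merged into one kernel-verified Lean document; each statement's English description precedes it below -/
import Mathlib

section
/- There exists a constant C > 0 such that for every Schwartz function f on ℝ and every t ≠ 0, the free fourth-order Schrödinger evolution (e^{−itΔ²}f)(x) := (2π)^{−1} ∫_ℝ e^{i x ξ} e^{−i t ξ⁴} \hat f(ξ) dξ satisfies ‖e^{−itΔ²}f‖_{L^∞(ℝ)} ≤ C |t|^{−1/4} ‖f‖_{L¹(ℝ)}. -/
open MeasureTheory Set

section Aux
open Complex intervalIntegral

lemma vdc_piece (b A B : ℝ) (hAB : A ≤ B)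
    (h : ∀ η ∈ Set.Icc A B, 1 ≤ |b - 4*η^3|) :
    ‖∫ η in A..B, Complex.exp (Complex.I * ((b*η - η^4 : ℝ) : ℂ))‖ ≤ 4 := by
  have huIcc : Set.uIcc A B = Set.Icc A B := Set.uIcc_of_le hAB
  set φ' : ℝ → ℝ := fun η => b - 4*η^3 with hφ'
  have hφne : ∀ η ∈ Set.Icc A B, φ' η ≠ 0 := by
    intro η hη h0
    have := h η hη
    simp only [hφ'] at h0
    rw [h0] at this; norm_num at this
  have hne : ∀ η ∈ Set.Icc A B, (Complex.I * (φ' η : ℂ)) ≠ 0 := by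
    intro η hη
    simp [Complex.I_ne_zero, Complex.ofReal_ne_zero, hφne η hη]
  set u : ℝ → ℂ := fun η => 1 / (Complex.I * (φ' η : ℂ)) with hu
  set v : ℝ → ℂ := fun η => Complex.exp (Complex.I * ((b*η - η^4 : ℝ) : ℂ)) with hv
  set v' : ℝ → ℂ := fun η => (Complex.I * (φ' η : ℂ)) * v η with hv'
  set u' : ℝ → ℂ := fun η => -(Complex.I * ((-12*η^2 : ℝ) : ℂ)) / (Complex.I * (φ' η : ℂ))^2 with hu'
  have hvnorm : ∀ η : ℝ, ‖v η‖ = 1 := by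
    intro η
    rw [hv]; simp only [mul_comm Complex.I]
    exact Complex.norm_exp_ofReal_mul_I _
  have hdense : ∀ η : ℝ, HasDerivAt (fun η : ℝ => Complex.I * (φ' η : ℂ))
      (Complex.I * ((-12*η^2 : ℝ) : ℂ)) η := by
    intro η
    have h0 : HasDerivAt φ' (-12*η^2 : ℝ) η := by
      have := ((hasDerivAt_pow 3 η).const_mul (4:ℝ)).const_sub b
      refine this.congr_deriv ?_; push_cast; ring
    exact (h0.ofReal_comp).const_mul _
  have huder : ∀ η ∈ Set.Icc A B, HasDerivAt u (u' η) η := by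
    intro η hη
    have h2 := (hasDerivAt_const η (1:ℂ)).div (hdense η) (hne η hη)
    refine h2.congr_deriv ?_
    rw [hu']; ring
  have hvder : ∀ η : ℝ, HasDerivAt v (v' η) η := by
    intro η
    have h1 : HasDerivAt (fun η : ℝ => ((b*η - η^4 : ℝ) : ℂ)) ((φ' η : ℝ) : ℂ) η := by
      have h0 : HasDerivAt (fun η : ℝ => (b*η - η^4 : ℝ)) (φ' η) η := by
        have := ((hasDerivAt_id η).const_mul b).sub (hasDerivAt_pow 4 η)
        refine this.congr_deriv ?_; rw [hφ']; push_cast; ring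
      exact h0.ofReal_comp
    have h2 := (h1.const_mul Complex.I).cexp
    convert h2 using 1
    rw [hv', hv]; ring
  have hucont : ContinuousOn u (Set.uIcc A B) := by
    rw [huIcc, hu]
    exact ContinuousOn.div (by fun_prop) (by fun_prop) hne
  have hvcont : Continuous v := by rw [hv]; fun_prop
  have hu'int : IntervalIntegrable u' volume A B := by
    apply ContinuousOn.intervalIntegrable
    rw [huIcc, hu']
    apply ContinuousOn.div (by fun_prop) (by fun_prop)
    intro η hη
    exact pow_ne_zero 2 (hne η hη)
  have hv'int : IntervalIntegrable v' volume A B := by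
    apply Continuous.intervalIntegrable; rw [hv']; fun_prop
  have ibp : ∫ η in A..B, u η * v' η = u B * v B - u A * v A - ∫ η in A..B, u' η * v η := by
    apply integral_mul_deriv_eq_deriv_mul_of_hasDerivAt hucont (hvcont.continuousOn)
      (fun x hx => huder x (Set.mem_Icc_of_Ioo (by rwa [min_eq_left hAB, max_eq_right hAB] at hx)))
      (fun x _ => hvder x) hu'int hv'int
  have heq : ∫ η in A..B, Complex.exp (Complex.I * ((b*η - η^4 : ℝ) : ℂ)) = ∫ η in A..B, u η * v' η := by
    apply intervalIntegral.integral_congr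
    intro η hη
    rw [huIcc] at hη
    have hz := hne η hη
    show v η = u η * v' η
    simp only [hu, hv']
    field_simp
    exact (mul_div_cancel_right₀ _ (by exact_mod_cast hφne η hη)).symm
  rw [heq, ibp]
  have habs : ∀ η ∈ Set.Icc A B, |φ' η|⁻¹ ≤ 1 := by
    intro η hη
    have h1 := h η hη
    rw [show |b - 4*η^3| = |φ' η| from rfl] at h1
    exact inv_le_one_of_one_le₀ h1
  have hunorm : ∀ η ∈ Set.Icc A B, ‖u η‖ ≤ 1 := by
    intro η hη
    rw [hu]
    simp only [one_div, norm_inv, norm_mul, Complex.norm_I, Complex.norm_real, one_mul,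
      Real.norm_eq_abs]
    exact habs η hη
  have hAm : A ∈ Set.Icc A B := ⟨le_refl A, hAB⟩
  have hBm : B ∈ Set.Icc A B := ⟨hAB, le_refl B⟩
  have htail : ‖∫ η in A..B, u' η * v η‖ ≤ 2 := by
    have h1 : ‖∫ η in A..B, u' η * v η‖ ≤ ∫ η in A..B, ‖u' η * v η‖ :=
      intervalIntegral.norm_integral_le_integral_norm hAB
    have h2 : ∫ η in A..B, ‖u' η * v η‖ = ∫ η in A..B, 12*η^2 / (φ' η)^2 := by
      apply intervalIntegral.integral_congr
      intro η hη
      rw [huIcc] at hη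
      simp only
      rw [norm_mul, hvnorm, mul_one, hu']
      simp only [norm_div, norm_neg, norm_mul, norm_pow, Complex.norm_I, Complex.norm_real,
        one_mul, Real.norm_eq_abs]
      rw [show |(12:ℝ)| = 12 from abs_of_nonneg (by norm_num), _root_.sq_abs, _root_.sq_abs]
    have h3 : ∫ η in A..B, 12*η^2 / (φ' η)^2 = (φ' B)⁻¹ - (φ' A)⁻¹ := by
      apply intervalIntegral.integral_eq_sub_of_hasDerivAt
      · intro η hη
        rw [huIcc] at hη
        have h0 : HasDerivAt φ' (-12*η^2 : ℝ) η := by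
          have := ((hasDerivAt_pow 3 η).const_mul (4:ℝ)).const_sub b
          refine this.congr_deriv ?_; push_cast; ring
        have := h0.inv (hφne η hη)
        refine this.congr_deriv ?_
        ring
      · apply ContinuousOn.intervalIntegrable
        rw [huIcc]
        apply ContinuousOn.div (by fun_prop) (by fun_prop)
        intro η hη
        exact pow_ne_zero 2 (hφne η hη)
    have h4 : (φ' B)⁻¹ - (φ' A)⁻¹ ≤ 2 := by
      have hBb : |(φ' B)⁻¹| ≤ 1 := by rw [abs_inv]; exact habs B hBm
      have hAb : |(φ' A)⁻¹| ≤ 1 := by rw [abs_inv]; exact habs A hAm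
      calc (φ' B)⁻¹ - (φ' A)⁻¹ ≤ |(φ' B)⁻¹| + |(φ' A)⁻¹| := by
            calc (φ' B)⁻¹ - (φ' A)⁻¹ ≤ |(φ' B)⁻¹ - (φ' A)⁻¹| := le_abs_self _
            _ ≤ |(φ' B)⁻¹| + |(φ' A)⁻¹| := abs_sub _ _
        _ ≤ 2 := by linarith
    calc ‖∫ η in A..B, u' η * v η‖ ≤ ∫ η in A..B, ‖u' η * v η‖ := h1
      _ = (φ' B)⁻¹ - (φ' A)⁻¹ := by rw [h2, h3]
      _ ≤ 2 := h4
  calc ‖u B * v B - u A * v A - ∫ η in A..B, u' η * v η‖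
      ≤ ‖u B * v B - u A * v A‖ + ‖∫ η in A..B, u' η * v η‖ := norm_sub_le _ _
    _ ≤ (‖u B * v B‖ + ‖u A * v A‖) + 2 := by
        gcongr
        exact norm_sub_le _ _
    _ ≤ (1*1 + 1*1) + 2 := by
        gcongr
        · rw [norm_mul, hvnorm]; gcongr; exact hunorm B hBm
        · rw [norm_mul, hvnorm]; gcongr; exact hunorm A hAm
    _ ≤ 4 := by norm_num

lemma phase_norm (r : ℝ) : ‖Complex.exp (Complex.I * (r:ℂ))‖ = 1 := by
  rw [mul_comm]; exact Complex.norm_exp_ofReal_mul_I _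

lemma phase_cont (b : ℝ) : Continuous (fun η : ℝ => Complex.exp (Complex.I * ((b*η - η^4 : ℝ) : ℂ))) := by
  fun_prop

lemma triv_piece (b A B : ℝ) (hAB : A ≤ B) :
    ‖∫ η in A..B, Complex.exp (Complex.I * ((b*η - η^4 : ℝ) : ℂ))‖ ≤ B - A := by
  have := intervalIntegral.norm_integral_le_of_norm_le_const
    (C := 1) (f := fun η : ℝ => Complex.exp (Complex.I * ((b*η - η^4 : ℝ) : ℂ)))
    (a := A) (b := B) (fun x _ => by rw [phase_norm])
  rwa [one_mul, _root_.abs_of_nonneg (by linarith : (0:ℝ) ≤ B - A)] at this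

lemma core_half (b R : ℝ) (hR : 0 ≤ R) :
    ‖∫ η in (0:ℝ)..R, Complex.exp (Complex.I * ((b*η - η^4 : ℝ) : ℂ))‖ ≤ 9 := by
  set f : ℝ → ℂ := fun η => Complex.exp (Complex.I * ((b*η - η^4 : ℝ) : ℂ)) with hf
  have hint : ∀ A B : ℝ, IntervalIntegrable f volume A B :=
    fun A B => (phase_cont b).intervalIntegrable A B
  rcases le_or_gt b 1 with hb | hb
  · -- b ≤ 1 : c = 0, d ≤ 1
    set d : ℝ := (max 0 ((b+1)/4)) ^ ((1:ℝ)/3) with hd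
    have hd0 : 0 ≤ d := Real.rpow_nonneg (le_max_left _ _) _
    have hd3 : d^3 = max 0 ((b+1)/4) := by
      rw [hd, ← Real.rpow_natCast _ 3, ← Real.rpow_mul (le_max_left _ _)]
      norm_num
    have hd1 : d ≤ 1 := by
      have h3 : d^3 ≤ 1 := by
        rw [hd3]; apply max_le (by norm_num); linarith
      nlinarith [sq_nonneg d, sq_nonneg (d-1), hd0]
    have hgood : ∀ η : ℝ, d ≤ η → 1 ≤ |b - 4*η^3| := by
      intro η hη
      have hη0 : 0 ≤ η := le_trans hd0 hη
      have : d^3 ≤ η^3 := pow_le_pow_left₀ hd0 hη 3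
      have h4 : (b+1)/4 ≤ η^3 := le_trans (le_trans (le_max_right _ _) hd3.ge) this
      rw [le_abs]; right; linarith
    rcases le_total R d with hRd | hdR
    · have := triv_piece b 0 R hR
      calc ‖∫ η in (0:ℝ)..R, f η‖ ≤ R - 0 := this
        _ ≤ 9 := by linarith
    · have hsplit : (∫ η in (0:ℝ)..d, f η) + (∫ η in d..R, f η) = ∫ η in (0:ℝ)..R, f η :=
        intervalIntegral.integral_add_adjacent_intervals (hint 0 d) (hint d R)
      rw [← hsplit]
      have t1 : ‖∫ η in (0:ℝ)..d, f η‖ ≤ d - 0 := triv_piece b 0 d hd0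
      have t2 : ‖∫ η in d..R, f η‖ ≤ 4 :=
        vdc_piece b d R hdR (fun η hη => hgood η hη.1)
      calc ‖(∫ η in (0:ℝ)..d, f η) + (∫ η in d..R, f η)‖
          ≤ ‖∫ η in (0:ℝ)..d, f η‖ + ‖∫ η in d..R, f η‖ := norm_add_le _ _
        _ ≤ 9 := by linarith
  · -- 1 < b
    set c : ℝ := ((b-1)/4) ^ ((1:ℝ)/3) with hc
    set d : ℝ := ((b+1)/4) ^ ((1:ℝ)/3) with hd
    have hbm : 0 ≤ (b-1)/4 := by linarith
    have hbp : 0 ≤ (b+1)/4 := by linarith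
    have hc0 : 0 ≤ c := Real.rpow_nonneg hbm _
    have hd0 : 0 ≤ d := Real.rpow_nonneg hbp _
    have hc3 : c^3 = (b-1)/4 := by
      rw [hc, ← Real.rpow_natCast _ 3, ← Real.rpow_mul hbm]; norm_num
    have hd3 : d^3 = (b+1)/4 := by
      rw [hd, ← Real.rpow_natCast _ 3, ← Real.rpow_mul hbp]; norm_num
    have hcd : c ≤ d := by
      rw [hc, hd]
      apply Real.rpow_le_rpow hbm (by linarith) (by norm_num)
    have hdc1 : d - c ≤ 1 := by
      have h1 : d^3 ≤ (c+1)^3 := by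
        rw [hd3]; nlinarith [sq_nonneg c, hc3, hc0]
      have := le_of_pow_le_pow_left₀ (by norm_num : (3:ℕ) ≠ 0) (by linarith : (0:ℝ) ≤ c + 1) h1
      linarith
    have hgoodlo : ∀ η : ℝ, 0 ≤ η → η ≤ c → 1 ≤ |b - 4*η^3| := by
      intro η hη0 hηc
      have : η^3 ≤ c^3 := pow_le_pow_left₀ hη0 hηc 3
      rw [le_abs]; left; rw [hc3] at this; linarith
    have hgoodhi : ∀ η : ℝ, d ≤ η → 1 ≤ |b - 4*η^3| := by
      intro η hη
      have : d^3 ≤ η^3 := pow_le_pow_left₀ hd0 hη 3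
      rw [le_abs]; right; rw [hd3] at this; linarith
    rcases le_total R c with hRc | hcR
    · have := vdc_piece b 0 R hR (fun η hη => hgoodlo η hη.1 (le_trans hη.2 hRc))
      linarith
    · rcases le_total R d with hRd | hdR
      · have hsplit : (∫ η in (0:ℝ)..c, f η) + (∫ η in c..R, f η) = ∫ η in (0:ℝ)..R, f η :=
          intervalIntegral.integral_add_adjacent_intervals (hint 0 c) (hint c R)
        rw [← hsplit]
        have t1 : ‖∫ η in (0:ℝ)..c, f η‖ ≤ 4 :=
          vdc_piece b 0 c hc0 (fun η hη => hgoodlo η hη.1 hη.2)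
        have t2 : ‖∫ η in c..R, f η‖ ≤ R - c := triv_piece b c R hcR
        calc ‖(∫ η in (0:ℝ)..c, f η) + (∫ η in c..R, f η)‖
            ≤ ‖∫ η in (0:ℝ)..c, f η‖ + ‖∫ η in c..R, f η‖ := norm_add_le _ _
          _ ≤ 9 := by linarith
      · have hsplit2 : (∫ η in c..d, f η) + (∫ η in d..R, f η) = ∫ η in c..R, f η :=
          intervalIntegral.integral_add_adjacent_intervals (hint c d) (hint d R)
        have hsplit : (∫ η in (0:ℝ)..c, f η) + (∫ η in c..R, f η) = ∫ η in (0:ℝ)..R, f η :=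
          intervalIntegral.integral_add_adjacent_intervals (hint 0 c) (hint c R)
        rw [← hsplit, ← hsplit2]
        have t1 : ‖∫ η in (0:ℝ)..c, f η‖ ≤ 4 :=
          vdc_piece b 0 c hc0 (fun η hη => hgoodlo η hη.1 hη.2)
        have t2 : ‖∫ η in c..d, f η‖ ≤ d - c := triv_piece b c d hcd
        have t3 : ‖∫ η in d..R, f η‖ ≤ 4 :=
          vdc_piece b d R hdR (fun η hη => hgoodhi η hη.1)
        calc ‖(∫ η in (0:ℝ)..c, f η) + ((∫ η in c..d, f η) + (∫ η in d..R, f η))‖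
            ≤ ‖∫ η in (0:ℝ)..c, f η‖ + (‖∫ η in c..d, f η‖ + ‖∫ η in d..R, f η‖) :=
              norm_add_le_of_le le_rfl (norm_add_le _ _)
          _ ≤ 9 := by linarith

lemma core_line (b R : ℝ) (hR : 0 ≤ R) :
    ‖∫ η in (-R)..R, Complex.exp (Complex.I * ((b*η - η^4 : ℝ) : ℂ))‖ ≤ 18 := by
  have hsplit : (∫ η in (-R)..(0:ℝ), Complex.exp (Complex.I * ((b*η - η^4 : ℝ) : ℂ)))
      + (∫ η in (0:ℝ)..R, Complex.exp (Complex.I * ((b*η - η^4 : ℝ) : ℂ)))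
      = ∫ η in (-R)..R, Complex.exp (Complex.I * ((b*η - η^4 : ℝ) : ℂ)) :=
    intervalIntegral.integral_add_adjacent_intervals ((phase_cont b).intervalIntegrable _ _)
      ((phase_cont b).intervalIntegrable _ _)
  rw [← hsplit]
  have hneg : (∫ η in (-R)..(0:ℝ), Complex.exp (Complex.I * ((b*η - η^4 : ℝ) : ℂ)))
      = ∫ η in (0:ℝ)..R, Complex.exp (Complex.I * (((-b)*η - η^4 : ℝ) : ℂ)) := by
    have := intervalIntegral.integral_comp_neg
      (f := fun η : ℝ => Complex.exp (Complex.I * ((b*η - η^4 : ℝ) : ℂ))) (a := (0:ℝ)) (b := R)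
    rw [neg_zero] at this
    rw [← this]
    apply intervalIntegral.integral_congr
    intro η _
    norm_num [neg_pow]
  rw [hneg]
  calc _ ≤ ‖∫ η in (0:ℝ)..R, Complex.exp (Complex.I * (((-b)*η - η^4 : ℝ) : ℂ))‖
      + ‖∫ η in (0:ℝ)..R, Complex.exp (Complex.I * ((b*η - η^4 : ℝ) : ℂ))‖ := norm_add_le _ _
    _ ≤ 18 := by
      have h1 := core_half (-b) R hR
      have h2 := core_half b R hR
      linarith

lemma core_line_sign (ε b R : ℝ) (hε : ε = 1 ∨ ε = -1) (hR : 0 ≤ R) :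
    ‖∫ η in (-R)..R, Complex.exp (Complex.I * ((b*η - ε*η^4 : ℝ) : ℂ))‖ ≤ 18 := by
  rcases hε with h | h
  · subst h
    have := core_line b R hR
    convert this using 3 with η
    norm_num
  · subst h
    have key : (∫ η in (-R)..R, Complex.exp (Complex.I * ((b*η - (-1)*η^4 : ℝ) : ℂ)))
        = (starRingEnd ℂ) (∫ η in (-R)..R, Complex.exp (Complex.I * (((-b)*η - η^4 : ℝ) : ℂ))) := by
      rw [intervalIntegral.integral_of_le (by linarith : (-R) ≤ R),
          intervalIntegral.integral_of_le (by linarith : (-R) ≤ R), ← integral_conj]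
      apply MeasureTheory.integral_congr_ae
      filter_upwards with η
      rw [← Complex.exp_conj]
      congr 1
      rw [map_mul, Complex.conj_I, Complex.conj_ofReal]
      push_cast
      ring
    rw [key, RCLike.norm_conj]
    exact core_line (-b) R hR

lemma kernel_bound (a t R : ℝ) (ht : t ≠ 0) (hR : 0 ≤ R) :
    ‖∫ ξ in (-R)..R, Complex.exp (Complex.I * ((a*ξ - t*ξ^4 : ℝ) : ℂ))‖
      ≤ 18 * |t| ^ (-(1/4) : ℝ) := by
  set s : ℝ := |t| ^ (-(1/4) : ℝ) with hsdef
  have hs : 0 < s := Real.rpow_pos_of_pos (abs_pos.mpr ht) _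
  have hs4 : s^4 = |t|⁻¹ := by
    rw [hsdef, ← Real.rpow_natCast (|t| ^ (-(1/4) : ℝ)) 4, ← Real.rpow_mul (abs_nonneg t)]
    norm_num
    exact Real.rpow_neg_one _
  clear hsdef
  clear_value s
  have hε : t * s^4 = 1 ∨ t * s^4 = -1 := by
    rcases lt_or_gt_of_ne ht with h | h
    · right; rw [hs4, abs_of_neg h]; field_simp
    · left; rw [hs4, abs_of_pos h]; field_simp
  set f : ℝ → ℂ := fun ξ => Complex.exp (Complex.I * ((a*ξ - t*ξ^4 : ℝ) : ℂ)) with hf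
  have key := intervalIntegral.integral_comp_mul_left (f := f) (a := -(R/s)) (b := R/s)
    (c := s) (ne_of_gt hs)
  rw [show s * -(R/s) = -R from by rw [mul_neg, mul_comm s, div_mul_cancel₀ _ (ne_of_gt hs)],
    show s * (R/s) = R from by rw [mul_comm s, div_mul_cancel₀ _ (ne_of_gt hs)]] at key
  have key2 : (∫ ξ in (-R)..R, f ξ) = s • ∫ x in (-(R/s))..(R/s), f (s * x) := by
    rw [key, smul_smul, mul_inv_cancel₀ (ne_of_gt hs), one_smul]
  have hcongr : (∫ x in (-(R/s))..(R/s), f (s * x))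
      = ∫ x in (-(R/s))..(R/s), Complex.exp (Complex.I * (((a*s)*x - (t*s^4)*x^4 : ℝ) : ℂ)) := by
    apply intervalIntegral.integral_congr
    intro x _
    rw [hf]
    have h9 : (a*(s*x) - t*(s*x)^4 : ℝ) = ((a*s)*x - (t*s^4)*x^4 : ℝ) := by ring
    simp only
    rw [h9]
  have hbound : ‖∫ x in (-(R/s))..(R/s),
      Complex.exp (Complex.I * (((a*s)*x - (t*s^4)*x^4 : ℝ) : ℂ))‖ ≤ 18 :=
    core_line_sign (t*s^4) (a*s) (R/s) hε (div_nonneg hR hs.le)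
  rw [key2, hcongr, norm_smul, Real.norm_eq_abs, _root_.abs_of_pos hs]
  calc s * ‖∫ x in (-(R/s))..(R/s),
        Complex.exp (Complex.I * (((a*s)*x - (t*s^4)*x^4 : ℝ) : ℂ))‖
      ≤ s * 18 := by gcongr
    _ = 18 * s := by ring

lemma norm_exp_neg_I_mul (y ξ : ℝ) : ‖Complex.exp (-(Complex.I * (y:ℂ) * (ξ:ℂ)))‖ = 1 := by
  rw [Complex.norm_exp]
  simp


end Aux

/-- the `L¹ → L∞` dispersive estimate for the free fourth-order
Schrödinger evolution on `ℝ`: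
`‖e^{-itΔ²} f‖_∞ ≤ C |t|^{-1/4} ‖f‖₁`, where
`(e^{-itΔ²}f)(x) = (2π)⁻¹ ∫ e^{ixξ} e^{-itξ⁴} \hat f(ξ) dξ` and
`\hat f(ξ) = ∫ e^{-ixξ} f(x) dx`. -/
theorem stmt3 :
    ∃ C : ℝ, 0 < C ∧
      ∀ (f : SchwartzMap ℝ ℂ) (t : ℝ), t ≠ 0 → ∀ x : ℝ,
        ‖(((2 * Real.pi)⁻¹ : ℝ) : ℂ) *
            ∫ ξ : ℝ, Complex.exp (Complex.I * (x : ℂ) * (ξ : ℂ)) *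
              Complex.exp (-(Complex.I * (t : ℂ) * (ξ : ℂ) ^ 4)) *
              (∫ y : ℝ, Complex.exp (-(Complex.I * (y : ℂ) * (ξ : ℂ))) * f y)‖ ≤
          C * |t| ^ (-(1/4) : ℝ) * ∫ y : ℝ, ‖f y‖ := by
  refine ⟨3, by norm_num, ?_⟩
  intro f t ht x
  have hπ : 0 < Real.pi := Real.pi_pos
  set N : ℝ := ∫ y : ℝ, ‖f y‖ with hN
  have hN0 : 0 ≤ N := integral_nonneg (fun y => norm_nonneg _)
  set s : ℝ := |t| ^ (-(1/4) : ℝ) with hs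
  have hs0 : 0 < s := Real.rpow_pos_of_pos (abs_pos.mpr ht) _
  set F : ℝ → ℂ := fun ξ => ∫ y : ℝ, Complex.exp (-(Complex.I * (y:ℂ) * (ξ:ℂ))) * f y with hF
  have hFeq : F = fun ξ => FourierTransform.fourier (⇑f : ℝ → ℂ) (ξ * (2 * Real.pi)⁻¹) := by
    funext ξ
    rw [hF, Real.fourier_real_eq_integral_exp_smul]
    simp only
    apply MeasureTheory.integral_congr_ae
    filter_upwards with y
    rw [smul_eq_mul]
    congr 1
    have : (-2 * Real.pi * y * (ξ * (2 * Real.pi)⁻¹) : ℝ) = -(y * ξ) := by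
      field_simp
    rw [this]
    push_cast
    ring
  have hFcont : Continuous F := by
    rw [hFeq]
    have : Continuous (⇑(SchwartzMap.fourierTransformCLM ℂ f)) := SchwartzMap.continuous _
    rw [SchwartzMap.fourierTransformCLM_apply, SchwartzMap.fourier_coe] at this
    fun_prop
  have hFint : Integrable F := by
    rw [hFeq]
    have h1 : Integrable (⇑(SchwartzMap.fourierTransformCLM ℂ f)) :=
      SchwartzMap.integrable _
    rw [SchwartzMap.fourierTransformCLM_apply, SchwartzMap.fourier_coe] at h1
    exact h1.comp_mul_right' (by positivity)
  set G : ℝ → ℂ := fun ξ => Complex.exp (Complex.I * (x : ℂ) * (ξ : ℂ)) *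
      Complex.exp (-(Complex.I * (t : ℂ) * (ξ : ℂ) ^ 4)) * F ξ with hG
  have hGcont : Continuous G := by
    rw [hG]; fun_prop
  have hGint : Integrable G := by
    apply hFint.norm.mono' hGcont.aestronglyMeasurable
    filter_upwards with ξ
    rw [hG]
    simp only
    rw [norm_mul, norm_mul]
    have e1 : ‖Complex.exp (Complex.I * (x : ℂ) * (ξ : ℂ))‖ = 1 := by
      rw [show Complex.I * (x:ℂ) * (ξ:ℂ) = Complex.I * ((x*ξ : ℝ):ℂ) from by push_cast; ring]
      exact phase_norm _
    have e2 : ‖Complex.exp (-(Complex.I * (t : ℂ) * (ξ : ℂ) ^ 4))‖ = 1 := by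
      rw [show -(Complex.I * (t:ℂ) * (ξ:ℂ)^4) = Complex.I * ((-(t*ξ^4) : ℝ):ℂ) from by
        push_cast; ring]
      exact phase_norm _
    rw [e1, e2, one_mul, one_mul]
  -- truncated bound
  have htrunc : ∀ n : ℕ, ‖∫ ξ in (-(n:ℝ))..(n:ℝ), G ξ‖ ≤ 18 * s * N := by
    intro n
    have hn : (-(n:ℝ)) ≤ (n:ℝ) := by
      have : (0:ℝ) ≤ n := Nat.cast_nonneg n
      linarith
    rw [intervalIntegral.integral_of_le hn]
    set H : ℝ → ℝ → ℂ := fun ξ y => Complex.exp (Complex.I * (x : ℂ) * (ξ : ℂ)) *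
        Complex.exp (-(Complex.I * (t : ℂ) * (ξ : ℂ) ^ 4)) *
        (Complex.exp (-(Complex.I * (y:ℂ) * (ξ:ℂ))) * f y) with hH
    have hHcont : Continuous (Function.uncurry H) := by
      rw [hH]
      apply Continuous.mul
      · apply Continuous.mul
        · fun_prop
        · fun_prop
      · apply Continuous.mul
        · fun_prop
        · exact f.continuous.comp continuous_snd
    have hHnorm : ∀ ξ y, ‖H ξ y‖ = ‖f y‖ := by
      intro ξ y
      rw [hH]
      simp only
      rw [norm_mul, norm_mul, norm_mul]
      have e1 : ‖Complex.exp (Complex.I * (x : ℂ) * (ξ : ℂ))‖ = 1 := by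
        rw [show Complex.I * (x:ℂ) * (ξ:ℂ) = Complex.I * ((x*ξ : ℝ):ℂ) from by push_cast; ring]
        exact phase_norm _
      have e2 : ‖Complex.exp (-(Complex.I * (t : ℂ) * (ξ : ℂ) ^ 4))‖ = 1 := by
        rw [show -(Complex.I * (t:ℂ) * (ξ:ℂ)^4) = Complex.I * ((-(t*ξ^4) : ℝ):ℂ) from by
          push_cast; ring]
        exact phase_norm _
      rw [e1, e2, norm_exp_neg_I_mul]
      ring
    have hHint : Integrable (Function.uncurry H)
        ((volume.restrict (Set.Ioc (-(n:ℝ)) (n:ℝ))).prod volume) := by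
      have hdom : Integrable (fun p : ℝ × ℝ => (1:ℝ) * ‖f p.2‖)
          ((volume.restrict (Set.Ioc (-(n:ℝ)) (n:ℝ))).prod volume) := by
        apply Integrable.mul_prod (integrable_const (1:ℝ)) (f.integrable.norm)
      apply hdom.mono' hHcont.aestronglyMeasurable
      filter_upwards with p
      rw [show Function.uncurry H p = H p.1 p.2 from rfl, hHnorm, one_mul]
    have hswap : (∫ ξ in Set.Ioc (-(n:ℝ)) (n:ℝ), G ξ) = ∫ y : ℝ, ∫ ξ in Set.Ioc (-(n:ℝ)) (n:ℝ), H ξ y := by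
      rw [← MeasureTheory.integral_integral_swap hHint]
      apply MeasureTheory.integral_congr_ae
      filter_upwards with ξ
      rw [hG, hH]
      simp only
      rw [← MeasureTheory.integral_const_mul]
    rw [hswap]
    -- inner kernel
    have hker : ∀ y : ℝ, (∫ ξ in Set.Ioc (-(n:ℝ)) (n:ℝ), H ξ y)
        = (∫ ξ in (-(n:ℝ))..(n:ℝ), Complex.exp (Complex.I * (((x-y)*ξ - t*ξ^4 : ℝ) : ℂ))) * f y := by
      intro y
      rw [intervalIntegral.integral_of_le hn, ← MeasureTheory.integral_mul_const]
      apply MeasureTheory.integral_congr_ae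
      filter_upwards with ξ
      rw [hH]
      simp only
      rw [show Complex.exp (Complex.I * (x : ℂ) * (ξ : ℂ)) *
            Complex.exp (-(Complex.I * (t : ℂ) * (ξ : ℂ) ^ 4)) *
            (Complex.exp (-(Complex.I * (y:ℂ) * (ξ:ℂ))) * f y)
          = Complex.exp (Complex.I * (x : ℂ) * (ξ : ℂ)) *
            Complex.exp (-(Complex.I * (t : ℂ) * (ξ : ℂ) ^ 4)) *
            Complex.exp (-(Complex.I * (y:ℂ) * (ξ:ℂ))) * f y from by ring,
        ← Complex.exp_add, ← Complex.exp_add]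
      congr 2
      push_cast
      ring
    have hbnd : ∀ y : ℝ, ‖(∫ ξ in Set.Ioc (-(n:ℝ)) (n:ℝ), H ξ y)‖ ≤ 18 * s * ‖f y‖ := by
      intro y
      rw [hker y, norm_mul]
      have := kernel_bound (x - y) t (n:ℝ) ht (Nat.cast_nonneg n)
      calc ‖∫ ξ in (-(n:ℝ))..(n:ℝ), Complex.exp (Complex.I * (((x-y)*ξ - t*ξ^4 : ℝ) : ℂ))‖ * ‖f y‖
          ≤ (18 * s) * ‖f y‖ := mul_le_mul_of_nonneg_right this (norm_nonneg _)
        _ = 18 * s * ‖f y‖ := by ring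
    have : ‖∫ y : ℝ, ∫ ξ in Set.Ioc (-(n:ℝ)) (n:ℝ), H ξ y‖ ≤ ∫ y : ℝ, 18 * s * ‖f y‖ := by
      apply MeasureTheory.norm_integral_le_of_norm_le ((f.integrable.norm).const_mul (18*s))
      filter_upwards with y
      exact hbnd y
    calc ‖∫ y : ℝ, ∫ ξ in Set.Ioc (-(n:ℝ)) (n:ℝ), H ξ y‖ ≤ ∫ y : ℝ, 18 * s * ‖f y‖ := this
      _ = 18 * s * N := by rw [hN, MeasureTheory.integral_const_mul]
  -- pass to the limit
  have hT : Filter.Tendsto (fun n : ℕ => ∫ ξ in (-(n:ℝ))..(n:ℝ), G ξ) Filter.atTop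
      (nhds (∫ ξ : ℝ, G ξ)) := by
    apply MeasureTheory.intervalIntegral_tendsto_integral hGint
    · exact Filter.tendsto_neg_atBot_iff.mpr tendsto_natCast_atTop_atTop
    · exact tendsto_natCast_atTop_atTop
  have hlim : ‖∫ ξ : ℝ, G ξ‖ ≤ 18 * s * N := by
    apply le_of_tendsto (hT.norm)
    filter_upwards with n
    exact htrunc n
  -- conclude
  have hfinal : ‖(((2 * Real.pi)⁻¹ : ℝ) : ℂ) * ∫ ξ : ℝ, G ξ‖ ≤ 3 * s * N := by
    rw [norm_mul, Complex.norm_real, Real.norm_eq_abs,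
      _root_.abs_of_pos (by positivity : (0:ℝ) < (2 * Real.pi)⁻¹)]
    have hpi3 : (3:ℝ) ≤ Real.pi := by
      have := Real.pi_gt_three
      linarith
    calc (2 * Real.pi)⁻¹ * ‖∫ ξ : ℝ, G ξ‖ ≤ (2 * Real.pi)⁻¹ * (18 * s * N) := by gcongr
      _ ≤ 3 * s * N := by
        rw [inv_mul_le_iff₀ (by positivity)]
        nlinarith [mul_nonneg hs0.le hN0]
  exact hfinal
end

section
/- Let μ > 0 and let F ∈ C²(ℝ, ℂ) with F′(0) = 0. Then for all x, y ∈ ℝ: F(μ|x−y|) = F(μ|x|) − μ y · sgn(x) F′(μ|x|) + μ² y² ∫₀¹ (1−θ) F″(μ|x−θy|) dθ. -/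
open MeasureTheory Set

open Asymptotics

lemma aux1 (F : ℝ → ℂ) (hF1 : Differentiable ℝ F) (hF'0 : deriv F 0 = 0) (t : ℝ) :
    HasDerivAt (fun s => F |s|) (((Real.sign t : ℝ) : ℂ) * deriv F |t|) t := by
  rcases lt_trichotomy t 0 with ht | rfl | ht
  · have h1 : HasDerivAt (fun s : ℝ => F (-s)) ((-1 : ℝ) • deriv F (-t)) t := by
      simpa [Function.comp_def] using ((hF1 (-t)).hasDerivAt).scomp t (hasDerivAt_neg t)
    have h2 : (fun s : ℝ => F |s|) =ᶠ[nhds t] fun s => F (-s) := by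
      filter_upwards [Iio_mem_nhds ht] with s hs
      rw [abs_of_neg hs]
    simpa [Real.sign_of_neg ht, abs_of_neg ht, Complex.real_smul] using
      h1.congr_of_eventuallyEq h2
  · rw [hasDerivAt_iff_isLittleO]
    simp only [Real.sign_zero, abs_zero, Complex.ofReal_zero, zero_mul, sub_zero, smul_zero]
    have h0 : HasDerivAt F 0 0 := hF'0 ▸ (hF1 0).hasDerivAt
    rw [hasDerivAt_iff_isLittleO] at h0
    simp only [sub_zero, smul_zero] at h0
    have habs : Filter.Tendsto (fun s : ℝ => |s|) (nhds 0) (nhds 0) := by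
      simpa using continuous_abs.tendsto (0 : ℝ)
    have h3 := h0.comp_tendsto habs
    refine (h3.trans_isBigO ?_).congr' (by rfl) (by rfl)
    simpa [Real.norm_eq_abs, Function.comp_def] using (isBigO_refl (fun s : ℝ => s) (nhds 0)).norm_left
  · have h1 : HasDerivAt (fun s : ℝ => F s) (deriv F t) t := (hF1 t).hasDerivAt
    have h2 : (fun s : ℝ => F |s|) =ᶠ[nhds t] fun s => F s := by
      filter_upwards [Ioi_mem_nhds ht] with s hs
      rw [abs_of_pos hs]
    simpa [Real.sign_of_pos ht, abs_of_pos ht] using h1.congr_of_eventuallyEq h2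

lemma sgn_mul_abs (s : ℝ) : Real.sign s * |s| = s := by
  rcases lt_trichotomy s 0 with h | rfl | h
  · rw [Real.sign_of_neg h, abs_of_neg h]; ring
  · simp
  · rw [Real.sign_of_pos h, abs_of_pos h]; ring

lemma aux2 (F : ℝ → ℂ) (hF2 : Differentiable ℝ (deriv F)) (hF'0 : deriv F 0 = 0) (t : ℝ) :
    HasDerivAt (fun s => ((Real.sign s : ℝ) : ℂ) * deriv F |s|) (deriv (deriv F) |t|) t := by
  rcases lt_trichotomy t 0 with ht | rfl | ht
  · have h1 : HasDerivAt (fun s : ℝ => -deriv F (-s)) (deriv (deriv F) (-t)) t := by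
      have := (((hF2 (-t)).hasDerivAt).scomp t (hasDerivAt_neg t)).neg
      simpa [Function.comp_def, Pi.neg_def] using this
    have h2 : (fun s : ℝ => ((Real.sign s : ℝ) : ℂ) * deriv F |s|) =ᶠ[nhds t]
        fun s => -deriv F (-s) := by
      filter_upwards [Iio_mem_nhds ht] with s hs
      have hs' : s < 0 := hs
      simp [Real.sign_of_neg hs', abs_of_neg hs']
    simpa [abs_of_neg ht] using h1.congr_of_eventuallyEq h2
  · rw [hasDerivAt_iff_isLittleO]
    simp only [Real.sign_zero, abs_zero, Complex.ofReal_zero, zero_mul, sub_zero]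
    have h0 : HasDerivAt (deriv F) (deriv (deriv F) 0) 0 := (hF2 0).hasDerivAt
    rw [hasDerivAt_iff_isLittleO] at h0
    simp only [sub_zero, hF'0, sub_zero] at h0
    have habs : Filter.Tendsto (fun s : ℝ => |s|) (nhds 0) (nhds 0) := by
      simpa using continuous_abs.tendsto (0 : ℝ)
    have h3 := h0.comp_tendsto habs
    have h4 : (fun s : ℝ => deriv F |s| - |s| • deriv (deriv F) 0) =o[nhds 0]
        fun s : ℝ => s := by
      refine (h3.trans_isBigO ?_).congr' (by rfl) (by rfl)
      simpa [Real.norm_eq_abs, Function.comp_def] using (isBigO_refl (fun s : ℝ => s) (nhds 0)).norm_left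
    have key : ∀ s : ℝ, ((Real.sign s : ℝ) : ℂ) * deriv F |s| - s • deriv (deriv F) 0
        = ((Real.sign s : ℝ) : ℂ) * (deriv F |s| - |s| • deriv (deriv F) 0) := by
      intro s
      simp only [Complex.real_smul, mul_sub, ← mul_assoc, ← Complex.ofReal_mul,
        sgn_mul_abs]
    have hbig : (fun s : ℝ => ((Real.sign s : ℝ) : ℂ) * deriv F |s| - s • deriv (deriv F) 0)
        =O[nhds 0] fun s : ℝ => deriv F |s| - |s| • deriv (deriv F) 0 := by
      refine isBigO_of_le _ fun s => ?_
      rw [key s, norm_mul]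
      have : ‖((Real.sign s : ℝ) : ℂ)‖ ≤ 1 := by
        rcases lt_trichotomy s 0 with h | rfl | h <;>
          simp [Real.sign_of_neg, Real.sign_of_pos, *]
      calc ‖((Real.sign s : ℝ) : ℂ)‖ * ‖deriv F |s| - |s| • deriv (deriv F) 0‖
          ≤ 1 * ‖deriv F |s| - |s| • deriv (deriv F) 0‖ := by gcongr
        _ = _ := one_mul _
    exact hbig.trans_isLittleO h4
  · have h1 : HasDerivAt (deriv F) (deriv (deriv F) t) t := (hF2 t).hasDerivAt
    have h2 : (fun s : ℝ => ((Real.sign s : ℝ) : ℂ) * deriv F |s|) =ᶠ[nhds t]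
        fun s => deriv F s := by
      filter_upwards [Ioi_mem_nhds ht] with s hs
      have hs' : (0:ℝ) < s := hs
      simp [Real.sign_of_pos hs', abs_of_pos hs']
    simpa [abs_of_pos ht] using h1.congr_of_eventuallyEq h2

lemma sign_mul_left_pos {μ : ℝ} (hμ : 0 < μ) (x : ℝ) : Real.sign (μ * x) = Real.sign x := by
  rcases lt_trichotomy x 0 with h | rfl | h
  · rw [Real.sign_of_neg h, Real.sign_of_neg (mul_neg_of_pos_of_neg hμ h)]
  · simp
  · rw [Real.sign_of_pos h, Real.sign_of_pos (mul_pos hμ h)]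

/-- Lemma 2.4 (ii): second-order Taylor-type expansion of
`F(μ|x−y|)` around `μ|x|`, valid for `F ∈ C²(ℝ, ℂ)` with `F′(0) = 0`:
`F(μ|x−y|) = F(μ|x|) − μ y sgn(x) F′(μ|x|) + μ² y² ∫₀¹ (1−θ) F″(μ|x−θy|) dθ`. -/
theorem stmt4
    (μ : ℝ) (hμ : 0 < μ)
    (F : ℝ → ℂ) (hF : ContDiff ℝ 2 F) (hF'0 : deriv F 0 = 0)
    (x y : ℝ) :
    F (μ * |x - y|) =
      F (μ * |x|) - ((μ * y * Real.sign x : ℝ) : ℂ) * deriv F (μ * |x|) +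
        ((μ ^ 2 * y ^ 2 : ℝ) : ℂ) *
          ∫ θ in (0:ℝ)..1, ((1 - θ : ℝ) : ℂ) * deriv (deriv F) (μ * |x - θ * y|) := by

  have hC1 : ContDiff ℝ 1 (deriv F) := by
    have := ContDiff.iterate_deriv' 1 1 (f := F) (by exact_mod_cast hF)
    simpa using this
  have hF1 : Differentiable ℝ F := hF.differentiable two_ne_zero
  have hF2 : Differentiable ℝ (deriv F) := hC1.differentiable one_ne_zero
  have hF2c : Continuous (deriv (deriv F)) := hC1.continuous_deriv le_rfl
  set a := μ * x with ha
  set b := μ * y with hb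
  set G : ℝ → ℂ := fun θ => F |a - θ * b| with hGdef
  set G1 : ℝ → ℂ := fun θ =>
    ((-b : ℝ) : ℂ) * (((Real.sign (a - θ * b) : ℝ) : ℂ) * deriv F |a - θ * b|) with hG1def
  set G2 : ℝ → ℂ := fun θ => ((b ^ 2 : ℝ) : ℂ) * deriv (deriv F) |a - θ * b| with hG2def
  have hlin : ∀ θ : ℝ, HasDerivAt (fun θ : ℝ => a - θ * b) (-b) θ := fun θ => by
    simpa using ((hasDerivAt_id θ).mul_const b).const_sub a
  have hG' : ∀ θ : ℝ, HasDerivAt G (G1 θ) θ := by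
    intro θ
    have := (aux1 F hF1 hF'0 (a - θ * b)).scomp θ (hlin θ)
    simpa [hGdef, hG1def, Complex.real_smul, Function.comp_def] using this
  have hG1' : ∀ θ : ℝ, HasDerivAt G1 (G2 θ) θ := by
    intro θ
    have h := ((aux2 F hF2 hF'0 (a - θ * b)).scomp θ (hlin θ)).const_mul ((-b : ℝ) : ℂ)
    convert h using 1
    · rfl
    · rfl
    simp only [hG2def, Complex.real_smul]
    push_cast
    ring
  have hcontG1 : Continuous G1 := by
    rw [continuous_iff_continuousAt]
    exact fun θ => (hG1' θ).continuousAt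
  have hcontG2 : Continuous G2 := by
    apply continuous_const.mul
    exact hF2c.comp ((continuous_const.sub (continuous_id.mul continuous_const)).abs)
  have hiG1 : IntervalIntegrable G1 volume 0 1 := hcontG1.intervalIntegrable 0 1
  have hiG2 : IntervalIntegrable G2 volume 0 1 := hcontG2.intervalIntegrable 0 1
  have hFTC : ∫ θ in (0:ℝ)..1, G1 θ = G 1 - G 0 :=
    intervalIntegral.integral_eq_sub_of_hasDerivAt (fun θ _ => hG' θ) hiG1
  have hu : ∀ θ ∈ Set.uIcc (0:ℝ) 1, HasDerivAt (fun θ : ℝ => ((1 - θ : ℝ) : ℂ)) (-1) θ := by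
    intro θ _
    have h : HasDerivAt (fun θ : ℝ => (1 : ℂ) - (θ : ℂ)) (-1) θ := by
      simpa using (Complex.ofRealCLM.hasDerivAt (x := θ)).const_sub (1 : ℂ)
    refine h.congr_of_eventuallyEq ?_
    filter_upwards with s
    push_cast
    ring
  have hcontU : Continuous fun θ : ℝ => ((1 - θ : ℝ) : ℂ) :=
    Complex.continuous_ofReal.comp (continuous_const.sub continuous_id)
  have hIBP := intervalIntegral.integral_deriv_mul_eq_sub
      (u := fun θ : ℝ => ((1 - θ : ℝ) : ℂ)) (v := G1)
      (u' := fun _ => (-1 : ℂ)) (v' := G2)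
      hu (fun θ _ => hG1' θ)
      (continuous_const.intervalIntegrable 0 1)
      hiG2
  have hsplit : ∫ θ in (0:ℝ)..1, ((-1 : ℂ) * G1 θ + ((1 - θ : ℝ) : ℂ) * G2 θ)
      = (∫ θ in (0:ℝ)..1, (-1 : ℂ) * G1 θ) + ∫ θ in (0:ℝ)..1, ((1 - θ : ℝ) : ℂ) * G2 θ :=
    intervalIntegral.integral_add (hiG1.const_mul _) ((hcontU.mul hcontG2).intervalIntegrable 0 1)
  have hmain : ∫ θ in (0:ℝ)..1, ((1 - θ : ℝ) : ℂ) * G2 θ = -G1 0 + (G 1 - G 0) := by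
    have h1 : ∫ θ in (0:ℝ)..1, (-1 : ℂ) * G1 θ = -(G 1 - G 0) := by
      rw [intervalIntegral.integral_const_mul, hFTC]; ring
    rw [hsplit, h1] at hIBP
    have h2 : ((1 - 1 : ℝ) : ℂ) * G1 1 - ((1 - 0 : ℝ) : ℂ) * G1 0 = -G1 0 := by
      push_cast; ring
    rw [h2] at hIBP
    linear_combination hIBP
  have habsμ : ∀ t : ℝ, μ * |t| = |μ * t| := fun t => by rw [abs_mul, abs_of_pos hμ]
  have e1 : F (μ * |x - y|) = G 1 := by
    simp only [hGdef]
    rw [habsμ]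
    congr 2
    simp only [ha, hb]; ring
  have e0 : F (μ * |x|) = G 0 := by
    simp only [hGdef]
    rw [habsμ]
    congr 2
    simp only [ha]; ring
  have eG1 : ((μ * y * Real.sign x : ℝ) : ℂ) * deriv F (μ * |x|) = -G1 0 := by
    simp only [hG1def]
    have h1 : a - 0 * b = μ * x := by simp [ha]
    rw [h1, sign_mul_left_pos hμ, habsμ]
    simp only [hb]
    push_cast
    ring
  have eInt : ((μ ^ 2 * y ^ 2 : ℝ) : ℂ) *
      (∫ θ in (0:ℝ)..1, ((1 - θ : ℝ) : ℂ) * deriv (deriv F) (μ * |x - θ * y|))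
      = ∫ θ in (0:ℝ)..1, ((1 - θ : ℝ) : ℂ) * G2 θ := by
    rw [← intervalIntegral.integral_const_mul]
    apply intervalIntegral.integral_congr
    intro θ _
    simp only [hG2def]
    have h1 : μ * |x - θ * y| = |a - θ * b| := by
      rw [habsμ]; congr 1; simp only [ha, hb]; ring
    rw [h1]
    simp only [hb]
    push_cast
    ring
  rw [e1, e0, eG1, eInt, hmain]
  ring
end

section
/- Let μ > 0 and let F ∈ C³(ℝ, ℂ) with F′(0) = 0 and F″(0) = 0. Then for all x, y ∈ ℝ: F(μ|x−y|) = F(μ|x|) − μ y · sgn(x) F′(μ|x|) + (μ² y²/2) F″(μ|x|) − (μ³ y³/2) ∫₀¹ (1−θ)² (sgn(x−θy))³ F‴(μ|x−θy|) dθ. -/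
open MeasureTheory Set

private lemma measurable_realSign : Measurable Real.sign := by
  unfold Real.sign
  refine Measurable.ite (measurableSet_lt measurable_id measurable_const) measurable_const ?_
  exact Measurable.ite (measurableSet_lt measurable_const measurable_id) measurable_const
    measurable_const

private lemma sign_cube (s : ℝ) : Real.sign s ^ 3 = Real.sign s := by
  rcases Real.sign_apply_eq s with h | h | h <;> rw [h] <;> norm_num

private lemma abs_sign_le (s : ℝ) : |Real.sign s| ≤ 1 := by
  rcases Real.sign_apply_eq s with h | h | h <;> rw [h] <;> norm_num

/-- Lemma 2.4 (iii): third-order Taylor-type expansion of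
`F(μ|x−y|)` around `μ|x|`, valid for `F ∈ C³(ℝ, ℂ)` with `F′(0) = F″(0) = 0`:
`F(μ|x−y|) = F(μ|x|) − μ y sgn(x) F′(μ|x|) + (μ²y²/2) F″(μ|x|)
  − (μ³y³/2) ∫₀¹ (1−θ)² (sgn(x−θy))³ F‴(μ|x−θy|) dθ`. -/
theorem stmt5
    (μ : ℝ) (hμ : 0 < μ)
    (F : ℝ → ℂ) (hF : ContDiff ℝ 3 F)
    (hF'0 : deriv F 0 = 0) (hF''0 : deriv (deriv F) 0 = 0)
    (x y : ℝ) :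
    F (μ * |x - y|) =
      F (μ * |x|) - ((μ * y * Real.sign x : ℝ) : ℂ) * deriv F (μ * |x|) +
        ((μ ^ 2 * y ^ 2 / 2 : ℝ) : ℂ) * deriv (deriv F) (μ * |x|) -
        ((μ ^ 3 * y ^ 3 / 2 : ℝ) : ℂ) *
          ∫ θ in (0:ℝ)..1,
            (((1 - θ) ^ 2 * (Real.sign (x - θ * y)) ^ 3 : ℝ) : ℂ) *
              deriv (deriv (deriv F)) (μ * |x - θ * y|) := by
  by_cases hy : y = 0
  · subst hy; simp
  set F1 := deriv F with hF1def
  set F2 := deriv F1 with hF2def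
  set F3 := deriv F2 with hF3def
  have hdF : Differentiable ℝ F := hF.differentiable (by norm_num)
  have hF1c : ContDiff ℝ 2 F1 := by
    have := ContDiff.iterate_deriv' 2 1 (show ContDiff ℝ ((2:ℕ) + (1:ℕ) : ℕ) F by
      exact_mod_cast hF)
    simpa [hF1def] using this
  have hdF1 : Differentiable ℝ F1 := hF1c.differentiable (by norm_num)
  have hF2c : ContDiff ℝ 1 F2 := by
    have := ContDiff.iterate_deriv' 1 1 (show ContDiff ℝ ((1:ℕ) + (1:ℕ) : ℕ) F1 by
      exact_mod_cast hF1c)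
    simpa [hF2def] using this
  have hdF2 : Differentiable ℝ F2 := hF2c.differentiable (by norm_num)
  have hcF3 : Continuous F3 := (contDiff_one_iff_deriv.mp hF2c).2
  -- chain rule for linear substitution
  have key : ∀ (Φ : ℝ → ℂ), Differentiable ℝ Φ → ∀ (c s : ℝ),
      HasDerivAt (fun t => Φ (c * t)) ((c : ℂ) * deriv Φ (c * s)) s := by
    intro Φ hΦ c s
    have h1 : HasDerivAt (fun t : ℝ => c * t) c s := by
      simpa using (hasDerivAt_id s).const_mul c
    have h2 := (hΦ (c * s)).hasDerivAt.scomp s h1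
    rw [Complex.real_smul] at h2; exact h2
  -- first derivative of G(s) = F(μ|s|)
  have aux1 : ∀ s : ℝ, HasDerivAt (fun t => F (μ * |t|))
      (((μ * Real.sign s : ℝ) : ℂ) * F1 (μ * |s|)) s := by
    intro s
    rcases lt_trichotomy s 0 with hs | hs | hs
    · have h := key F hdF (-μ) s
      have heq : (fun t => F (μ * |t|)) =ᶠ[nhds s] (fun t => F (-μ * t)) := by
        filter_upwards [Iio_mem_nhds hs] with t ht
        rw [abs_of_neg ht]; congr 1; ring
      have h2 : HasDerivAt (fun t => F (μ * |t|)) (((-μ : ℝ) : ℂ) * F1 (-μ * s)) s :=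
        HasDerivAt.congr_of_eventuallyEq h heq
      rw [Real.sign_of_neg hs, abs_of_neg hs, show μ * -s = -μ * s from by ring,
        show ((μ * -1 : ℝ) : ℂ) = ((-μ : ℝ) : ℂ) from by norm_num]
      exact h2
    · subst hs
      have h1 : HasDerivWithinAt (fun t => F (μ * |t|)) 0 (Ici 0) 0 := by
        have h := ((key F hdF μ 0).hasDerivWithinAt (s := Ici 0))
        have h0 : (μ : ℂ) * deriv F (μ * 0) = 0 := by
          simp [hF'0, ← hF1def]
        rw [h0] at h
        refine h.congr ?_ ?_
        · intro t ht; rw [abs_of_nonneg ht]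
        · simp
      have h2 : HasDerivWithinAt (fun t => F (μ * |t|)) 0 (Iic 0) 0 := by
        have h := ((key F hdF (-μ) 0).hasDerivWithinAt (s := Iic 0))
        have h0 : ((-μ : ℝ) : ℂ) * deriv F (-μ * 0) = 0 := by
          simp [hF'0, ← hF1def]
        rw [h0] at h
        refine h.congr ?_ ?_
        · intro t ht; rw [abs_of_nonpos ht]; congr 1; ring
        · simp
      have h3 := h2.union h1
      rw [Iic_union_Ici, hasDerivWithinAt_univ] at h3
      simpa using h3
    · have h := key F hdF μ s
      have heq : (fun t => F (μ * |t|)) =ᶠ[nhds s] (fun t => F (μ * t)) := by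
        filter_upwards [Ioi_mem_nhds hs] with t ht
        rw [abs_of_pos ht]
      have h2 : HasDerivAt (fun t => F (μ * |t|)) (((μ : ℝ) : ℂ) * F1 (μ * s)) s :=
        HasDerivAt.congr_of_eventuallyEq h heq
      rw [Real.sign_of_pos hs, abs_of_pos hs, mul_one]
      exact h2
  -- second derivative
  have aux2 : ∀ s : ℝ, HasDerivAt (fun t => ((μ * Real.sign t : ℝ) : ℂ) * F1 (μ * |t|))
      (((μ ^ 2 : ℝ) : ℂ) * F2 (μ * |s|)) s := by
    intro s
    rcases lt_trichotomy s 0 with hs | hs | hs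
    · have h := (key F1 hdF1 (-μ) s).const_mul (((-μ : ℝ) : ℂ))
      have heq : (fun t => ((μ * Real.sign t : ℝ) : ℂ) * F1 (μ * |t|)) =ᶠ[nhds s]
          (fun t => ((-μ : ℝ) : ℂ) * F1 (-μ * t)) := by
        filter_upwards [Iio_mem_nhds hs] with t ht
        rw [Real.sign_of_neg ht, abs_of_neg ht, show μ * -t = -μ * t from by ring,
          show μ * (-1 : ℝ) = -μ from by ring]
      have h2 := HasDerivAt.congr_of_eventuallyEq h heq
      rw [abs_of_neg hs, show μ * -s = -μ * s from by ring]
      convert h2 using 1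
      · rfl
      push_cast
      ring
    · subst hs
      have h1 : HasDerivWithinAt (fun t => ((μ * Real.sign t : ℝ) : ℂ) * F1 (μ * |t|))
          (((μ ^ 2 : ℝ) : ℂ) * F2 (μ * |0|)) (Ici 0) 0 := by
        have h := (((key F1 hdF1 μ 0).const_mul ((μ : ℝ) : ℂ)).hasDerivWithinAt (s := Ici 0))
        have h2 := h.congr (f₁ := fun t => ((μ * Real.sign t : ℝ) : ℂ) * F1 (μ * |t|)) ?_ ?_
        · convert h2 using 1
          · rfl
          push_cast
          simp [abs_zero]
          ring
        · intro t ht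
          beta_reduce
          rcases eq_or_lt_of_le (mem_Ici.mp ht) with h' | h'
          · rw [← h']
            simp [hF'0, ← hF1def]
          · rw [Real.sign_of_pos h', abs_of_pos h', mul_one]
        · simp [hF'0, ← hF1def]
      have h2 : HasDerivWithinAt (fun t => ((μ * Real.sign t : ℝ) : ℂ) * F1 (μ * |t|))
          (((μ ^ 2 : ℝ) : ℂ) * F2 (μ * |0|)) (Iic 0) 0 := by
        have h := (((key F1 hdF1 (-μ) 0).const_mul (((-μ : ℝ)) : ℂ)).hasDerivWithinAt (s := Iic 0))
        have h2 := h.congr (f₁ := fun t => ((μ * Real.sign t : ℝ) : ℂ) * F1 (μ * |t|)) ?_ ?_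
        · convert h2 using 1
          · rfl
          push_cast
          simp [abs_zero]
          ring
        · intro t ht
          beta_reduce
          rcases eq_or_lt_of_le (mem_Iic.mp ht) with h' | h'
          · rw [h']
            simp [hF'0, ← hF1def]
          · rw [Real.sign_of_neg h', abs_of_neg h']
            push_cast
            rw [show μ * -t = -μ * t from by ring]
            ring
        · simp [hF'0, ← hF1def]
      have h3 := h2.union h1
      rw [Iic_union_Ici, hasDerivWithinAt_univ] at h3
      exact h3
    · have h := (key F1 hdF1 μ s).const_mul (((μ : ℝ)) : ℂ)
      have heq : (fun t => ((μ * Real.sign t : ℝ) : ℂ) * F1 (μ * |t|)) =ᶠ[nhds s]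
          (fun t => ((μ : ℝ) : ℂ) * F1 (μ * t)) := by
        filter_upwards [Ioi_mem_nhds hs] with t ht
        rw [Real.sign_of_pos ht, abs_of_pos ht, mul_one]
      have h2 := HasDerivAt.congr_of_eventuallyEq h heq
      rw [abs_of_pos hs]
      convert h2 using 1
      · rfl
      push_cast
      ring
  -- third derivative, away from 0
  have aux3 : ∀ s : ℝ, s ≠ 0 → HasDerivAt (fun t => ((μ ^ 2 : ℝ) : ℂ) * F2 (μ * |t|))
      (((μ ^ 3 * Real.sign s : ℝ) : ℂ) * F3 (μ * |s|)) s := by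
    intro s hs0
    rcases lt_or_gt_of_ne hs0 with hs | hs
    · have h := (key F2 hdF2 (-μ) s).const_mul (((μ ^ 2 : ℝ)) : ℂ)
      have heq : (fun t => ((μ ^ 2 : ℝ) : ℂ) * F2 (μ * |t|)) =ᶠ[nhds s]
          (fun t => ((μ ^ 2 : ℝ) : ℂ) * F2 (-μ * t)) := by
        filter_upwards [Iio_mem_nhds hs] with t ht
        rw [abs_of_neg ht]
        congr 2
        ring
      have h2 := HasDerivAt.congr_of_eventuallyEq h heq
      rw [Real.sign_of_neg hs, abs_of_neg hs, show μ * -s = -μ * s from by ring]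
      convert h2 using 1
      · rfl
      push_cast
      ring
    · have h := (key F2 hdF2 μ s).const_mul (((μ ^ 2 : ℝ)) : ℂ)
      have heq : (fun t => ((μ ^ 2 : ℝ) : ℂ) * F2 (μ * |t|)) =ᶠ[nhds s]
          (fun t => ((μ ^ 2 : ℝ) : ℂ) * F2 (μ * t)) := by
        filter_upwards [Ioi_mem_nhds hs] with t ht
        rw [abs_of_pos ht]
      have h2 := HasDerivAt.congr_of_eventuallyEq h heq
      rw [Real.sign_of_pos hs, abs_of_pos hs]
      convert h2 using 1
      · rfl
      push_cast
      ring
  -- inner affine map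
  have hl : ∀ θ : ℝ, HasDerivAt (fun θ : ℝ => x - θ * y) (-y) θ :=
    fun θ => (hasDerivAt_mul_const y).const_sub x
  -- the auxiliary function h and the integrand f'
  set h : ℝ → ℂ := fun θ => F (μ * |x - θ * y|)
      - (((1 - θ) * y : ℝ) : ℂ) * (((μ * Real.sign (x - θ * y) : ℝ) : ℂ) * F1 (μ * |x - θ * y|))
      + (((1 - θ) ^ 2 / 2 * y ^ 2 : ℝ) : ℂ) * (((μ ^ 2 : ℝ) : ℂ) * F2 (μ * |x - θ * y|))
    with hhdef
  set f' : ℝ → ℂ := fun θ =>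
      ((-((1 - θ) ^ 2 / 2 * y ^ 3 * μ ^ 3 * Real.sign (x - θ * y)) : ℝ) : ℂ)
        * F3 (μ * |x - θ * y|) with hf'def
  -- everywhere derivatives of the pieces
  have hA : ∀ θ : ℝ, HasDerivAt (fun θ => F (μ * |x - θ * y|))
      ((-y) • (((μ * Real.sign (x - θ * y) : ℝ) : ℂ) * F1 (μ * |x - θ * y|))) θ :=
    fun θ => by have := (aux1 (x - θ * y)).scomp θ (hl θ); exact this
  have hB : ∀ θ : ℝ, HasDerivAt
      (fun θ => ((μ * Real.sign (x - θ * y) : ℝ) : ℂ) * F1 (μ * |x - θ * y|))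
      ((-y) • (((μ ^ 2 : ℝ) : ℂ) * F2 (μ * |x - θ * y|))) θ :=
    fun θ => by have := (aux2 (x - θ * y)).scomp θ (hl θ); exact this
  have hC : ∀ θ : ℝ, x - θ * y ≠ 0 → HasDerivAt
      (fun θ => ((μ ^ 2 : ℝ) : ℂ) * F2 (μ * |x - θ * y|))
      ((-y) • (((μ ^ 3 * Real.sign (x - θ * y) : ℝ) : ℂ) * F3 (μ * |x - θ * y|))) θ :=
    fun θ hθ => by have := (aux3 (x - θ * y) hθ).scomp θ (hl θ); exact this
  -- coefficient derivatives
  have hc1 : ∀ θ : ℝ, HasDerivAt (fun θ : ℝ => (((1 - θ) * y : ℝ) : ℂ)) ((-y : ℝ) : ℂ) θ := by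
    intro θ
    have : HasDerivAt (fun θ : ℝ => (1 - θ) * y) (-y) θ := by
      simpa using ((hasDerivAt_id θ).const_sub 1).mul_const y
    exact this.ofReal_comp
  have hc2 : ∀ θ : ℝ, HasDerivAt (fun θ : ℝ => (((1 - θ) ^ 2 / 2 * y ^ 2 : ℝ) : ℂ))
      ((-(1 - θ) * y ^ 2 : ℝ) : ℂ) θ := by
    intro θ
    have h0 : HasDerivAt (fun θ : ℝ => (1 - θ)) (-1) θ := by
      simpa using (hasDerivAt_id θ).const_sub 1
    have h1 := (((h0.pow 2).div_const 2).mul_const (y ^ 2)).ofReal_comp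
    convert h1 using 2
    · simp only [Pi.pow_apply]
    · norm_num
      left
      ring
  -- derivative of h off the singular point
  have hd : ∀ θ ∈ Ioo (0:ℝ) 1 \ {x / y}, HasDerivAt h (f' θ) θ := by
    intro θ hθ
    have hne : x - θ * y ≠ 0 := by
      intro h0
      apply hθ.2
      rw [sub_eq_zero] at h0
      rw [mem_singleton_iff, h0, mul_div_assoc, div_self hy, mul_one]
    have hder := ((hA θ).sub ((hc1 θ).mul (hB θ))).add ((hc2 θ).mul (hC θ hne))
    convert hder using 1
    · rfl
    · rfl
    simp only [hf'def, Complex.real_smul]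
    push_cast
    ring
  -- continuity of h
  have habs : Continuous (fun θ : ℝ => μ * |x - θ * y|) := by fun_prop
  have hcont : Continuous h := by
    have cA : Continuous (fun θ : ℝ => F (μ * |x - θ * y|)) := hF.continuous.comp habs
    have cB : Continuous
        (fun θ : ℝ => ((μ * Real.sign (x - θ * y) : ℝ) : ℂ) * F1 (μ * |x - θ * y|)) :=
      continuous_iff_continuousAt.mpr fun θ => (hB θ).continuousAt
    have cC : Continuous (fun θ : ℝ => ((μ ^ 2 : ℝ) : ℂ) * F2 (μ * |x - θ * y|)) :=
      continuous_const.mul ((hF2c.continuous.comp habs))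
    have c1 : Continuous (fun θ : ℝ => (((1 - θ) * y : ℝ) : ℂ)) := by fun_prop
    have c2 : Continuous (fun θ : ℝ => (((1 - θ) ^ 2 / 2 * y ^ 2 : ℝ) : ℂ)) := by fun_prop
    rw [hhdef]
    exact (cA.sub (c1.mul cB)).add (c2.mul cC)
  -- integrability of f'
  have hi : IntervalIntegrable f' volume 0 1 := by
    rw [intervalIntegrable_iff_integrableOn_Ioc_of_le zero_le_one]
    have hcont2 : Continuous (fun θ : ℝ =>
        ((-((1 - θ) ^ 2 / 2 * y ^ 3 * μ ^ 3) : ℝ) : ℂ) * F3 (μ * |x - θ * y|)) := by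
      have : Continuous (fun θ : ℝ => F3 (μ * |x - θ * y|)) := hcF3.comp habs
      fun_prop
    have hint : IntegrableOn (fun θ : ℝ =>
        ((-((1 - θ) ^ 2 / 2 * y ^ 3 * μ ^ 3) : ℝ) : ℂ) * F3 (μ * |x - θ * y|)) (Ioc 0 1) :=
      hcont2.integrableOn_Ioc
    have hmeas : AEStronglyMeasurable (fun θ : ℝ => ((Real.sign (x - θ * y) : ℝ) : ℂ))
        (volume.restrict (Ioc 0 1)) := by
      refine Measurable.aestronglyMeasurable ?_
      exact Complex.measurable_ofReal.comp
        (measurable_realSign.comp (by measurability))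
    have := hint.bdd_mul (c := 1) hmeas (Filter.Eventually.of_forall fun θ => by
      rw [Complex.norm_real]; exact abs_sign_le _)
    refine this.congr ?_
    filter_upwards with θ
    simp only [hf'def]
    push_cast
    ring
  -- fundamental theorem of calculus
  have hFTC : ∫ θ in (0:ℝ)..1, f' θ = h 1 - h 0 :=
    integral_eq_of_hasDerivAt_off_countable_of_le h f' zero_le_one
      (countable_singleton (x / y)) hcont.continuousOn hd hi
  -- rewrite the target integral
  have hIrw : ∫ θ in (0:ℝ)..1, f' θ = ((-(μ ^ 3 * y ^ 3 / 2) : ℝ) : ℂ) *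
      ∫ θ in (0:ℝ)..1, (((1 - θ) ^ 2 * (Real.sign (x - θ * y)) ^ 3 : ℝ) : ℂ) *
        F3 (μ * |x - θ * y|) := by
    rw [← intervalIntegral.integral_const_mul]
    apply intervalIntegral.integral_congr
    intro θ _
    simp only [hf'def]
    rw [show ((1 - θ) ^ 2 * (Real.sign (x - θ * y)) ^ 3 : ℝ)
        = (1 - θ) ^ 2 * Real.sign (x - θ * y) from by rw [sign_cube]]
    push_cast
    ring
  rw [hIrw] at hFTC
  have h1v : h 1 = F (μ * |x - y|) := by
    simp only [hhdef]
    norm_num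
  have h0v : h 0 = F (μ * |x|)
      - ((y : ℝ) : ℂ) * (((μ * Real.sign x : ℝ) : ℂ) * F1 (μ * |x|))
      + ((1 / 2 * y ^ 2 : ℝ) : ℂ) * (((μ ^ 2 : ℝ) : ℂ) * F2 (μ * |x|)) := by
    simp only [hhdef]
    norm_num
  rw [h1v, h0v] at hFTC
  have := hFTC
  push_cast at this ⊢
  linear_combination (-1 : ℂ) * this
end

section
/- Set a⁺ = (−1+i)/4, a₋₁⁺ = (−1−i)/8, a₁⁺ = (−1+i)/96, and for μ > 0 and x, y ∈ ℝ define E(μ; x, y) = R₀⁺(μ⁴)(x,y) − a⁺/μ³ − (a₋₁⁺/μ)|x−y|² − |x−y|³/12 − a₁⁺ μ |x−y|⁴. Then there exists a constant C > 0 such that for all μ > 0 and all x, y ∈ ℝ: |E(μ; x, y)| ≤ C μ³ |x−y|⁶ and |∂_μ E(μ; x, y)| ≤ C μ² |x−y|⁶. -/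
open MeasureTheory Set

/-- The error term `E(μ; x, y)` in the low-energy expansion of the free resolvent kernel
`R₀⁺(μ⁴)(x,y) = (i e^{iμ|x−y|} − e^{−μ|x−y|})/(4μ³)`, with
`a⁺ = (−1+i)/4`, `a₋₁⁺ = (−1−i)/8`, `a₁⁺ = (−1+i)/96`:
`E(μ;x,y) = R₀⁺(μ⁴)(x,y) − a⁺/μ³ − (a₋₁⁺/μ)|x−y|² − |x−y|³/12 − a₁⁺ μ |x−y|⁴`. -/
noncomputable def resolventError (μ x y : ℝ) : ℂ :=
  (Complex.I * Complex.exp (Complex.I * (μ : ℂ) * ((|x - y| : ℝ) : ℂ)) -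
      Complex.exp (-((μ : ℂ) * ((|x - y| : ℝ) : ℂ)))) / (4 * (μ : ℂ) ^ 3) -
    ((-1 + Complex.I) / 4) / (μ : ℂ) ^ 3 -
    ((-1 - Complex.I) / 8) / (μ : ℂ) * ((|x - y| : ℝ) : ℂ) ^ 2 -
    ((|x - y| : ℝ) : ℂ) ^ 3 / 12 -
    ((-1 + Complex.I) / 96) * (μ : ℂ) * ((|x - y| : ℝ) : ℂ) ^ 4

/-- Remainder of the degree-4 Taylor expansion of `z ↦ i e^{iz} − e^{−z}`. -/
noncomputable def Rrem (z : ℝ) : ℂ :=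
  Complex.I * Complex.exp (Complex.I * z) - Complex.exp (-(z:ℂ))
    - ((-1 + Complex.I) + ((-1 - Complex.I)/2) * (z:ℂ)^2 + (z:ℂ)^3/3 + ((-1 + Complex.I)/24) * (z:ℂ)^4)

/-- The corresponding remainder arising in the μ-derivative. -/
noncomputable def Srem (z : ℝ) : ℂ :=
  (z:ℂ) * (-Complex.exp (Complex.I * z) + Complex.exp (-(z:ℂ)))
    - 3 * (Complex.I * Complex.exp (Complex.I * z) - Complex.exp (-(z:ℂ)))
    + (3 * (-1 + Complex.I) + ((-1 - Complex.I)/2) * (z:ℂ)^2 - ((-1 + Complex.I)/24) * (z:ℂ)^4)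

lemma he1 (z : ℝ) : ‖Complex.exp (Complex.I * z)‖ = 1 := by
  rw [Complex.norm_exp]; simp

lemma he2 (z : ℝ) (hz : 0 ≤ z) : ‖Complex.exp (-(z:ℂ))‖ ≤ 1 := by
  rw [Complex.norm_exp]
  simp only [Complex.neg_re, Complex.ofReal_re]
  exact Real.exp_le_one_iff.mpr (by linarith)

lemma nc1 : ‖(-1 + Complex.I : ℂ)‖ ≤ 2 := by
  refine (norm_add_le _ _).trans ?_; simp; norm_num

lemma nc2 : ‖(-1 - Complex.I : ℂ)‖ ≤ 2 := by
  refine (norm_sub_le _ _).trans ?_; simp; norm_num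

lemma znorm (z : ℝ) (hz : 0 ≤ z) : ‖z‖ = z := by
  rw [Real.norm_eq_abs, _root_.abs_of_nonneg hz]

open Finset in
lemma expA_bound (z : ℝ) (hz0 : 0 ≤ z) (hz : z ≤ 1) :
    ‖Complex.exp (Complex.I * z) - ∑ m ∈ range 6, (Complex.I * z)^m / m.factorial‖ ≤ z^6 / 600 := by
  have habs : ‖Complex.I * (z:ℂ)‖ = z := by
    rw [norm_mul, Complex.norm_I, one_mul, Complex.norm_real, Real.norm_eq_abs, _root_.abs_of_nonneg hz0]
  have h := Complex.exp_bound (x := Complex.I * z) (by rw [habs]; exact hz) (n := 6) (by norm_num)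
  rw [habs] at h
  refine h.trans ?_
  norm_num [Nat.factorial]
  nlinarith [pow_nonneg hz0 6]

open Finset in
lemma expB_bound (z : ℝ) (hz0 : 0 ≤ z) (hz : z ≤ 1) :
    ‖Complex.exp (-(z:ℂ)) - ∑ m ∈ range 6, (-(z:ℂ))^m / m.factorial‖ ≤ z^6 / 600 := by
  have habs : ‖-(z:ℂ)‖ = z := by
    rw [norm_neg, Complex.norm_real, Real.norm_eq_abs, _root_.abs_of_nonneg hz0]
  have h := Complex.exp_bound (x := -(z:ℂ)) (by rw [habs]; exact hz) (n := 6) (by norm_num)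
  rw [habs] at h
  refine h.trans ?_
  norm_num [Nat.factorial]
  nlinarith [pow_nonneg hz0 6]

open Finset in
lemma Rrem_eq (z : ℝ) :
    Rrem z
    = Complex.I * (Complex.exp (Complex.I * z) - ∑ m ∈ range 6, (Complex.I * z)^m / m.factorial)
      - (Complex.exp (-(z:ℂ)) - ∑ m ∈ range 6, (-(z:ℂ))^m / m.factorial) := by
  have h3 : (Complex.I)^3 = -Complex.I := by simp [pow_succ, Complex.I_sq]
  have h4 : (Complex.I)^4 = 1 := by simp [pow_succ, Complex.I_sq]
  have h5 : (Complex.I)^5 = Complex.I := by simp [pow_succ, Complex.I_sq]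
  have h6 : (Complex.I)^6 = -1 := by simp [pow_succ, Complex.I_sq]
  unfold Rrem
  simp [Finset.sum_range_succ, Nat.factorial]
  ring_nf
  rw [h3, h4, h5, h6, Complex.I_sq]
  ring_nf

open Finset in
lemma Srem_eq (z : ℝ) :
    Srem z
    = -(z:ℂ) * (Complex.exp (Complex.I * z) - ∑ m ∈ range 6, (Complex.I * z)^m / m.factorial)
      + (z:ℂ) * (Complex.exp (-(z:ℂ)) - ∑ m ∈ range 6, (-(z:ℂ))^m / m.factorial)
      - 3 * Complex.I * (Complex.exp (Complex.I * z) - ∑ m ∈ range 6, (Complex.I * z)^m / m.factorial)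
      + 3 * (Complex.exp (-(z:ℂ)) - ∑ m ∈ range 6, (-(z:ℂ))^m / m.factorial)
      + ((-1 - Complex.I)/120) * (z:ℂ)^6 := by
  have h3 : (Complex.I)^3 = -Complex.I := by simp [pow_succ, Complex.I_sq]
  have h4 : (Complex.I)^4 = 1 := by simp [pow_succ, Complex.I_sq]
  have h5 : (Complex.I)^5 = Complex.I := by simp [pow_succ, Complex.I_sq]
  have h6 : (Complex.I)^6 = -1 := by simp [pow_succ, Complex.I_sq]
  unfold Srem
  simp [Finset.sum_range_succ, Nat.factorial]
  ring_nf
  rw [h3, h4, h5, h6, Complex.I_sq]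
  ring_nf

lemma Rrem_bound (z : ℝ) (hz0 : 0 ≤ z) : ‖Rrem z‖ ≤ 20 * z^6 := by
  rcases le_or_gt z 1 with hz | hz
  · rw [Rrem_eq]
    have hA := expA_bound z hz0 hz
    have hB := expB_bound z hz0 hz
    refine (norm_sub_le _ _).trans ?_
    rw [norm_mul, Complex.norm_I, one_mul]
    nlinarith [pow_nonneg hz0 6]
  · have hz1 : (1:ℝ) ≤ z := hz.le
    have h2 : z^2 ≤ z^6 := pow_le_pow_right₀ hz1 (by norm_num)
    have h3 : z^3 ≤ z^6 := pow_le_pow_right₀ hz1 (by norm_num)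
    have h4 : z^4 ≤ z^6 := pow_le_pow_right₀ hz1 (by norm_num)
    have h1 : (1:ℝ) ≤ z^6 := by nlinarith
    have step : ‖Rrem z‖ ≤ ‖Complex.I * Complex.exp (Complex.I * z)‖ + ‖Complex.exp (-(z:ℂ))‖
        + (‖(-1 + Complex.I : ℂ)‖ + ‖((-1 - Complex.I)/2 : ℂ) * (z:ℂ)^2‖ + ‖(z:ℂ)^3/3‖
          + ‖((-1 + Complex.I)/24 : ℂ) * (z:ℂ)^4‖) := by
      unfold Rrem
      refine (norm_sub_le _ _).trans ?_
      gcongr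
      · exact norm_sub_le _ _
      · refine (norm_add_le _ _).trans ?_
        gcongr
        refine (norm_add_le _ _).trans ?_
        gcongr
        exact norm_add_le _ _
    have hne : ‖Complex.I * Complex.exp (Complex.I * z)‖ = 1 := by
      rw [norm_mul, Complex.norm_I, one_mul, he1]
    have hz2 : ‖((-1 - Complex.I)/2 : ℂ) * (z:ℂ)^2‖ ≤ 1 * z^2 := by
      rw [norm_mul, norm_pow, Complex.norm_real, znorm z hz0]
      gcongr
      rw [norm_div]
      simp only [Complex.norm_ofNat]
      nlinarith [nc2]
    have hz3 : ‖(z:ℂ)^3/3‖ ≤ z^3/3 := by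
      rw [norm_div, norm_pow, Complex.norm_real, znorm z hz0]
      simp
    have hz4 : ‖((-1 + Complex.I)/24 : ℂ) * (z:ℂ)^4‖ ≤ (1/12) * z^4 := by
      rw [norm_mul, norm_pow, Complex.norm_real, znorm z hz0]
      gcongr
      rw [norm_div]
      simp only [Complex.norm_ofNat]
      nlinarith [nc1]
    nlinarith [he2 z hz0, nc1, step, norm_nonneg (Rrem z)]

lemma tri5 (a b c d e : ℂ) : ‖a + b - c + d + e‖ ≤ ‖a‖ + ‖b‖ + ‖c‖ + ‖d‖ + ‖e‖ := by
  have h1 := norm_add_le (a + b - c + d) e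
  have h2 := norm_add_le (a + b - c) d
  have h3 := norm_sub_le (a + b) c
  have h4 := norm_add_le a b
  linarith

lemma Srem_bound (z : ℝ) (hz0 : 0 ≤ z) : ‖Srem z‖ ≤ 20 * z^6 := by
  have hz6 : (0:ℝ) ≤ z^6 := pow_nonneg hz0 6
  rcases le_or_gt z 1 with hz | hz
  · rw [Srem_eq]
    set EA : ℂ := Complex.exp (Complex.I * z)
        - ∑ m ∈ Finset.range 6, (Complex.I * z)^m / m.factorial with hEA
    set EB : ℂ := Complex.exp (-(z:ℂ))
        - ∑ m ∈ Finset.range 6, (-(z:ℂ))^m / m.factorial with hEB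
    have hA : ‖EA‖ ≤ z^6 / 600 := expA_bound z hz0 hz
    have hB : ‖EB‖ ≤ z^6 / 600 := expB_bound z hz0 hz
    have tri := tri5 (-(z:ℂ) * EA) ((z:ℂ) * EB) (3 * Complex.I * EA) (3 * EB)
        (((-1 - Complex.I)/120) * (z:ℂ)^6)
    have n1 : ‖-(z:ℂ) * EA‖ = z * ‖EA‖ := by
      rw [norm_mul, norm_neg, Complex.norm_real, znorm z hz0]
    have n2 : ‖(z:ℂ) * EB‖ = z * ‖EB‖ := by
      rw [norm_mul, Complex.norm_real, znorm z hz0]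
    have n3 : ‖(3 : ℂ) * Complex.I * EA‖ = 3 * ‖EA‖ := by
      rw [norm_mul, norm_mul, Complex.norm_I, mul_one]; norm_num
    have n4 : ‖(3 : ℂ) * EB‖ = 3 * ‖EB‖ := by
      rw [norm_mul]; norm_num
    have n5 : ‖((-1 - Complex.I)/120 : ℂ) * (z:ℂ)^6‖ ≤ (1/60) * z^6 := by
      rw [norm_mul, norm_pow, Complex.norm_real, znorm z hz0]
      gcongr
      rw [norm_div]
      simp only [Complex.norm_ofNat]
      nlinarith [nc2]
    have hzA : z * ‖EA‖ ≤ ‖EA‖ := by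
      nlinarith [norm_nonneg EA]
    have hzB : z * ‖EB‖ ≤ ‖EB‖ := by
      nlinarith [norm_nonneg EB]
    rw [n1, n2, n3, n4] at tri
    nlinarith [tri]
  · have hz1 : (1:ℝ) ≤ z := hz.le
    have h1 : (1:ℝ) ≤ z^6 := one_le_pow₀ hz1
    have hzz : z ≤ z^6 := by
      calc z = z^1 := (pow_one z).symm
        _ ≤ z^6 := pow_le_pow_right₀ hz1 (by norm_num)
    have h2 : z^2 ≤ z^6 := pow_le_pow_right₀ hz1 (by norm_num)
    have h4 : z^4 ≤ z^6 := pow_le_pow_right₀ hz1 (by norm_num)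
    set e1 : ℂ := Complex.exp (Complex.I * z) with he1'
    set e2 : ℂ := Complex.exp (-(z:ℂ)) with he2'
    have hn1 : ‖e1‖ = 1 := he1 z
    have hn2 : ‖e2‖ ≤ 1 := he2 z hz0
    have tA : ‖(z:ℂ) * (-e1 + e2)‖ ≤ z * 2 := by
      rw [norm_mul, Complex.norm_real, znorm z hz0]
      have : ‖-e1 + e2‖ ≤ 2 := by
        refine (norm_add_le _ _).trans ?_
        rw [norm_neg, hn1]; linarith
      exact mul_le_mul_of_nonneg_left this hz0
    have tB : ‖(3:ℂ) * (Complex.I * e1 - e2)‖ ≤ 3 * 2 := by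
      rw [norm_mul]
      simp only [Complex.norm_ofNat]
      gcongr
      refine (norm_sub_le _ _).trans ?_
      rw [norm_mul, Complex.norm_I, one_mul, hn1]; linarith
    have tC : ‖(3:ℂ) * (-1 + Complex.I)‖ ≤ 6 := by
      rw [norm_mul]
      simp only [Complex.norm_ofNat]
      nlinarith [nc1]
    have tD : ‖((-1 - Complex.I)/2 : ℂ) * (z:ℂ)^2‖ ≤ 1 * z^2 := by
      rw [norm_mul, norm_pow, Complex.norm_real, znorm z hz0]
      gcongr
      rw [norm_div]
      simp only [Complex.norm_ofNat]
      nlinarith [nc2]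
    have tE : ‖((-1 + Complex.I)/24 : ℂ) * (z:ℂ)^4‖ ≤ (1/12) * z^4 := by
      rw [norm_mul, norm_pow, Complex.norm_real, znorm z hz0]
      gcongr
      rw [norm_div]
      simp only [Complex.norm_ofNat]
      nlinarith [nc1]
    have step1 := norm_add_le ((z:ℂ) * (-e1 + e2) - 3 * (Complex.I * e1 - e2))
        (3 * (-1 + Complex.I) + ((-1 - Complex.I)/2) * (z:ℂ)^2 - ((-1 + Complex.I)/24) * (z:ℂ)^4)
    have step2 := norm_sub_le ((z:ℂ) * (-e1 + e2)) ((3:ℂ) * (Complex.I * e1 - e2))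
    have step3 := norm_sub_le ((3:ℂ) * (-1 + Complex.I) + ((-1 - Complex.I)/2) * (z:ℂ)^2)
        (((-1 + Complex.I)/24) * (z:ℂ)^4)
    have step4 := norm_add_le ((3:ℂ) * (-1 + Complex.I)) (((-1 - Complex.I)/2) * (z:ℂ)^2)
    have hSrem : Srem z = (z:ℂ) * (-e1 + e2) - 3 * (Complex.I * e1 - e2)
        + (3 * (-1 + Complex.I) + ((-1 - Complex.I)/2) * (z:ℂ)^2 - ((-1 + Complex.I)/24) * (z:ℂ)^4) := by
      unfold Srem; rw [← he1', ← he2']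
    rw [← hSrem] at step1
    nlinarith [step1]

lemma resolventError_eq (μ x y : ℝ) (hμ : 0 < μ) :
    resolventError μ x y = Rrem (μ * |x - y|) / (4 * (μ:ℂ)^3) := by
  have hμc : (μ:ℂ) ≠ 0 := by exact_mod_cast hμ.ne'
  unfold resolventError Rrem
  push_cast
  rw [show Complex.I * ((μ:ℂ) * (|x - y| : ℝ)) = Complex.I * (μ:ℂ) * ((|x - y| : ℝ):ℂ) from by ring]
  rw [eq_div_iff (by simp [hμc] : (4 * (μ:ℂ)^3) ≠ 0)]
  field_simp
  have h1 : ((μ:ℂ)^4) * ((μ:ℂ)⁻¹ ^ 4) = 1 := by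
    rw [← mul_pow, mul_inv_cancel₀ hμc, one_pow]
  ring

lemma hasDerivAt_resolventError (x y : ℝ) {μ : ℝ} (hμ : 0 < μ) :
    HasDerivAt (fun μ' : ℝ => resolventError μ' x y)
      (Srem (μ * |x - y|) / (4 * (μ:ℂ)^4)) μ := by
  have hμc : (μ:ℂ) ≠ 0 := by exact_mod_cast hμ.ne'
  set rc : ℂ := ((|x - y| : ℝ) : ℂ) with hrc
  have hofReal : HasDerivAt (fun t : ℝ => (t:ℂ)) 1 μ := by
    simpa using (hasDerivAt_id μ).ofReal_comp
  have hA : HasDerivAt (fun t : ℝ => Complex.exp (Complex.I * (t:ℂ) * rc))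
      (Complex.I * rc * Complex.exp (Complex.I * (μ:ℂ) * rc)) μ := by
    have h := (((hofReal.const_mul Complex.I)).mul_const rc).cexp
    convert h using 1
    ring
  have hB : HasDerivAt (fun t : ℝ => Complex.exp (-((t:ℂ) * rc)))
      (-rc * Complex.exp (-((μ:ℂ) * rc))) μ := by
    have h := ((hofReal.mul_const rc).neg).cexp
    convert h using 1
    · rfl
    · simp only [Pi.neg_apply]; ring
  have hN : HasDerivAt
      (fun t : ℝ => Complex.I * Complex.exp (Complex.I * (t:ℂ) * rc) - Complex.exp (-((t:ℂ) * rc)))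
      (Complex.I * (Complex.I * rc * Complex.exp (Complex.I * (μ:ℂ) * rc))
        - (-rc * Complex.exp (-((μ:ℂ) * rc)))) μ :=
    (hA.const_mul Complex.I).sub hB
  have hcube : HasDerivAt (fun t : ℝ => (t:ℂ)^3) (3 * (μ:ℂ)^2) μ := by
    simpa using (hasDerivAt_pow 3 (μ:ℂ)).comp_ofReal
  have hD := hcube.const_mul (4:ℂ)
  have hDne : (4:ℂ) * (μ:ℂ)^3 ≠ 0 := by simp [hμc]
  have hq := hN.div hD hDne
  have h2 := (hasDerivAt_const (𝕜 := ℝ) μ ((-1 + Complex.I)/4)).div hcube (pow_ne_zero 3 hμc)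
  have h3 := ((hasDerivAt_const (𝕜 := ℝ) μ ((-1 - Complex.I)/8)).div hofReal hμc).mul_const (rc^2)
  have h4 := hasDerivAt_const (𝕜 := ℝ) μ (rc^3/12)
  have h5 := (hofReal.const_mul ((-1 + Complex.I)/96)).mul_const (rc^4)
  have total := (((hq.sub h2).sub h3).sub h4).sub h5
  have heq : (fun μ' : ℝ => resolventError μ' x y)
      = (fun μ' : ℝ =>
          (Complex.I * Complex.exp (Complex.I * (μ':ℂ) * rc) - Complex.exp (-((μ':ℂ) * rc)))
              / (4 * (μ':ℂ)^3)
            - ((-1 + Complex.I)/4) / (μ':ℂ)^3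
            - ((-1 - Complex.I)/8) / (μ':ℂ) * rc^2
            - rc^3/12
            - ((-1 + Complex.I)/96) * (μ':ℂ) * rc^4) := by
    funext μ'
    simp only [resolventError, hrc]
  rw [heq]
  convert total using 1
  · rfl
  · rfl
  unfold Srem
  push_cast
  rw [show Complex.I * ((μ:ℂ) * rc) = Complex.I * (μ:ℂ) * rc from by ring]
  field_simp
  have h1 : ((μ:ℂ)^14) * ((μ:ℂ)⁻¹ ^ 14) = 1 := by
    rw [← mul_pow, mul_inv_cancel₀ hμc, one_pow]
  rw [← hrc, Complex.I_sq]
  ring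

/-- pointwise bounds for the error term in the low-energy expansion
of the free resolvent: `|E(μ;x,y)| ≤ C μ³ |x−y|⁶` and `|∂_μ E(μ;x,y)| ≤ C μ² |x−y|⁶`
for all `μ > 0` and `x, y ∈ ℝ`. -/
theorem stmt11 :
    ∃ C : ℝ, 0 < C ∧
      ∀ μ : ℝ, 0 < μ → ∀ x y : ℝ,
        ‖resolventError μ x y‖ ≤ C * μ ^ 3 * |x - y| ^ 6 ∧
        ‖deriv (fun μ' : ℝ => resolventError μ' x y) μ‖ ≤ C * μ ^ 2 * |x - y| ^ 6 := by
  refine ⟨5, by norm_num, fun μ hμ x y => ?_⟩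
  set r : ℝ := |x - y| with hr
  have hr0 : 0 ≤ r := abs_nonneg _
  have hz0 : 0 ≤ μ * r := mul_nonneg hμ.le hr0
  have hnorm3 : ‖(4 * (μ:ℂ)^3 : ℂ)‖ = 4 * μ^3 := by
    rw [norm_mul, norm_pow, Complex.norm_real, znorm μ hμ.le]
    simp
  have hnorm4 : ‖(4 * (μ:ℂ)^4 : ℂ)‖ = 4 * μ^4 := by
    rw [norm_mul, norm_pow, Complex.norm_real, znorm μ hμ.le]
    simp
  constructor
  · rw [resolventError_eq μ x y hμ, norm_div, hnorm3, div_le_iff₀ (by positivity)]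
    calc ‖Rrem (μ * r)‖ ≤ 20 * (μ * r)^6 := Rrem_bound _ hz0
      _ = 5 * μ^3 * r^6 * (4 * μ^3) := by ring
  · rw [(hasDerivAt_resolventError x y hμ).deriv, norm_div, hnorm4, div_le_iff₀ (by positivity)]
    calc ‖Srem (μ * r)‖ ≤ 20 * (μ * r)^6 := Srem_bound _ hz0
      _ = 5 * μ^2 * r^6 * (4 * μ^4) := by ring
end

section
/- Let v ∈ L²(ℝ) be nonnegative, not a.e. zero, with ∫_ℝ (1+|x|)⁴ v(x)² dx < ∞; let P be the orthogonal projection of L²(ℝ) onto span{v} and Q = I − P. Then for every f ∈ L²(ℝ) with ∫_ℝ v(x) f(x) dx = 0 one has ∫_ℝ ∫_ℝ \overline{v(x) f(x)} |x−y|² v(y) f(y) dy dx = −2 | ∫_ℝ x v(x) f(x) dx |². Consequently, for f ∈ QL²(ℝ), the function Q( v(·) ∫_ℝ |·−y|² v(y) f(y) dy ) vanishes in L²(ℝ) if and only if ∫_ℝ x v(x) f(x) dx = 0; that is, the kernel of Q v G₋₁ v Q on QL²(ℝ) is exactly S₀L²(ℝ) = {f ∈ L² : ∫ v f = ∫ x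 v f = 0}. -/
open MeasureTheory Set

/-- Lemma 4.1 (1): for `f ∈ L²(ℝ)` orthogonal to `v`
(`∫ v f = 0`), one has
`∬ conj(v(x)f(x)) |x−y|² v(y)f(y) dy dx = −2 |∫ x v(x) f(x) dx|²`;
consequently `v(·)∫|·−y|²v(y)f(y)dy` lies in `span{v}` in `L²` (i.e. `Q v G₋₁ v Q f = 0`)
if and only if `∫ x v f = 0`, so the kernel of `Q v G₋₁ v Q` on `QL²(ℝ)` is exactly
`S₀L²(ℝ) = {f : ∫ v f = ∫ x v f = 0}`. -/
theorem stmt13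
    (v : ℝ → ℝ) (hv_meas : Measurable v) (hv_nonneg : ∀ x, 0 ≤ v x)
    (hv_ne : ¬ v =ᵐ[volume] 0)
    (hv_int : Integrable (fun x : ℝ => (1 + |x|) ^ 4 * (v x) ^ 2))
    (f : ℝ → ℂ) (hf : MemLp f 2 (volume : Measure ℝ))
    (h0 : (∫ x : ℝ, (v x : ℂ) * f x) = 0) :
    (∫ x : ℝ, ∫ y : ℝ,
        (starRingEnd ℂ) ((v x : ℂ) * f x) * ((|x - y| ^ 2 : ℝ) : ℂ) * ((v y : ℂ) * f y)) =
      -2 * ((‖∫ x : ℝ, (x : ℂ) * (v x : ℂ) * f x‖ : ℝ) : ℂ) ^ 2 ∧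
    ((∃ c : ℂ,
        (fun x : ℝ => (v x : ℂ) * ∫ y : ℝ, ((|x - y| ^ 2 : ℝ) : ℂ) * (v y : ℂ) * f y)
          =ᵐ[volume] fun x : ℝ => c * (v x : ℂ)) ↔
      (∫ x : ℝ, (x : ℂ) * (v x : ℂ) * f x) = 0) := by
  have hvC : Measurable fun x : ℝ => (v x : ℂ) := Complex.measurable_ofReal.comp hv_meas
  have hgm : AEStronglyMeasurable (fun x : ℝ => (v x : ℂ) * f x) volume :=
    hvC.aestronglyMeasurable.mul hf.1
  -- the weighted function (1+|x|)² v is in L²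
  have hw_meas : Measurable fun x : ℝ => (1 + |x|) ^ 2 * v x :=
    ((measurable_const.add measurable_abs).pow_const 2).mul hv_meas
  have hw : MemLp (fun x : ℝ => (1 + |x|) ^ 2 * v x) 2 volume := by
    rw [memLp_two_iff_integrable_sq hw_meas.aestronglyMeasurable]
    have : (fun x : ℝ => ((1 + |x|) ^ 2 * v x) ^ 2)
        = fun x : ℝ => (1 + |x|) ^ 4 * (v x) ^ 2 := by funext x; ring
    rw [this]; exact hv_int
  have hint : Integrable (fun x : ℝ => ((1 + |x|) ^ 2 * v x) • f x) volume := by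
    rw [← memLp_one_iff_integrable]
    exact MemLp.smul (f := f) (φ := fun x : ℝ => (1 + |x|) ^ 2 * v x) hf hw
      (hpqr := ⟨by rw [ENNReal.inv_two_add_inv_two, inv_one]⟩)
  -- integrability of xᵏ v f for k ≤ 2
  have hbound : ∀ k : ℕ, k ≤ 2 →
      Integrable (fun x : ℝ => (x : ℂ) ^ k * ((v x : ℂ) * f x)) volume := by
    intro k hk
    refine hint.norm.mono'
      (((Complex.measurable_ofReal.comp measurable_id).pow_const k).aestronglyMeasurable.mul hgm)
      (Filter.Eventually.of_forall fun x => ?_)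
    have h1x : (1 : ℝ) ≤ 1 + |x| := le_add_of_nonneg_right (abs_nonneg x)
    have hxk : |x| ^ k ≤ (1 + |x|) ^ 2 :=
      le_trans (pow_le_pow_left₀ (abs_nonneg x) (le_add_of_nonneg_left one_pos.le) k)
        (pow_le_pow_right₀ h1x hk)
    have : ‖(x : ℂ) ^ k * ((v x : ℂ) * f x)‖ = |x| ^ k * (v x * ‖f x‖) := by
      simp [norm_mul, Complex.norm_real, abs_of_nonneg (hv_nonneg x), abs_pow]
    rw [this]
    have : ‖((1 + |x|) ^ 2 * v x) • f x‖ = (1 + |x|) ^ 2 * (v x * ‖f x‖) := by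
      rw [norm_smul]
      rw [Real.norm_eq_abs, abs_of_nonneg (mul_nonneg (by positivity) (hv_nonneg x))]
      ring
    rw [this]
    exact mul_le_mul_of_nonneg_right hxk (mul_nonneg (hv_nonneg x) (norm_nonneg _))
  have hI0 : Integrable (fun x : ℝ => (v x : ℂ) * f x) volume := by
    simpa using hbound 0 (by norm_num)
  have hI1 : Integrable (fun x : ℝ => (x : ℂ) * ((v x : ℂ) * f x)) volume := by
    simpa using hbound 1 (by norm_num)
  have hI2 : Integrable (fun x : ℝ => (x : ℂ) ^ 2 * ((v x : ℂ) * f x)) volume :=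
    hbound 2 le_rfl
  set M1 : ℂ := ∫ x : ℝ, (x : ℂ) * (v x : ℂ) * f x with hM1def
  set M2 : ℂ := ∫ x : ℝ, (x : ℂ) ^ 2 * ((v x : ℂ) * f x) with hM2def
  have hM1' : (∫ x : ℝ, (x : ℂ) * ((v x : ℂ) * f x)) = M1 := by
    rw [hM1def]; congr 1; funext x; ring
  -- the inner integral
  have key : ∀ x : ℝ, (∫ y : ℝ, ((|x - y| ^ 2 : ℝ) : ℂ) * (v y : ℂ) * f y)
      = M2 - 2 * (x : ℂ) * M1 := by
    intro x
    have heq : (fun y : ℝ => ((|x - y| ^ 2 : ℝ) : ℂ) * (v y : ℂ) * f y)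
        = fun y : ℝ => ((x : ℂ) ^ 2 * ((v y : ℂ) * f y)
            + (-(2 * (x : ℂ))) * ((y : ℂ) * ((v y : ℂ) * f y)))
            + (y : ℂ) ^ 2 * ((v y : ℂ) * f y) := by
      funext y
      rw [sq_abs]
      push_cast
      ring
    have hA : Integrable (fun y : ℝ => (x : ℂ) ^ 2 * ((v y : ℂ) * f y)
        + (-(2 * (x : ℂ))) * ((y : ℂ) * ((v y : ℂ) * f y))) volume :=
      (hI0.const_mul _).add (hI1.const_mul _)
    rw [heq, integral_add hA hI2,
      integral_add (hI0.const_mul _) (hI1.const_mul _),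
      integral_const_mul, integral_const_mul, h0, hM1']
    rw [← hM2def]
    ring
  have hconj : ∀ {h : ℝ → ℂ}, Integrable h volume →
      Integrable (fun x => (starRingEnd ℂ) (h x)) volume := by
    intro h hI
    refine hI.norm.mono' (Complex.continuous_conj.comp_aestronglyMeasurable hI.1)
      (Filter.Eventually.of_forall fun x => ?_)
    simp
  constructor
  · -- the quadratic form identity
    have inner_eq : ∀ x : ℝ,
        (∫ y : ℝ, (starRingEnd ℂ) ((v x : ℂ) * f x) * ((|x - y| ^ 2 : ℝ) : ℂ)
            * ((v y : ℂ) * f y))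
          = (starRingEnd ℂ) ((v x : ℂ) * f x) * (M2 - 2 * (x : ℂ) * M1) := by
      intro x
      rw [← key x, ← integral_const_mul]
      congr 1; funext y; ring
    calc (∫ x : ℝ, ∫ y : ℝ,
        (starRingEnd ℂ) ((v x : ℂ) * f x) * ((|x - y| ^ 2 : ℝ) : ℂ) * ((v y : ℂ) * f y))
        = ∫ x : ℝ, (starRingEnd ℂ) ((v x : ℂ) * f x) * (M2 - 2 * (x : ℂ) * M1) := by
          congr 1; funext x; exact inner_eq x
      _ = ∫ x : ℝ, (M2 * (starRingEnd ℂ) ((v x : ℂ) * f x)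
            + (-(2 * M1)) * (starRingEnd ℂ) ((x : ℂ) * ((v x : ℂ) * f x))) := by
          congr 1; funext x
          simp only [map_mul, Complex.conj_ofReal]
          ring
      _ = -2 * ((‖M1‖ : ℝ) : ℂ) ^ 2 := by
          have hB : Integrable (fun x : ℝ => M2 * (starRingEnd ℂ) ((v x : ℂ) * f x)) volume :=
            (hconj hI0).const_mul _
          have hC : Integrable (fun x : ℝ =>
              (-(2 * M1)) * (starRingEnd ℂ) ((x : ℂ) * ((v x : ℂ) * f x))) volume :=
            (hconj hI1).const_mul _
          rw [integral_add hB hC,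
            integral_const_mul, integral_const_mul, integral_conj, integral_conj, h0, hM1']
          have : M1 * (starRingEnd ℂ) M1 = ((‖M1‖ : ℝ) : ℂ) ^ 2 := by
            rw [Complex.mul_conj, Complex.normSq_eq_norm_sq]
            push_cast
            rfl
          rw [map_zero, mul_zero, zero_add]
          rw [show (-(2 * M1)) * (starRingEnd ℂ) M1 = -2 * (M1 * (starRingEnd ℂ) M1) by ring,
            this]
  · -- the kernel characterization
    have hfun : (fun x : ℝ => (v x : ℂ) * ∫ y : ℝ, ((|x - y| ^ 2 : ℝ) : ℂ) * (v y : ℂ) * f y)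
        = fun x : ℝ => (v x : ℂ) * (M2 - 2 * (x : ℂ) * M1) := by
      funext x; rw [key x]
    rw [hfun]
    constructor
    · rintro ⟨c, hc⟩
      by_contra hM1
      set t : ℂ := (M2 - c) / (2 * M1) with ht
      have h2M1 : (2 : ℂ) * M1 ≠ 0 := by
        simp [hM1]
      have hae : ∀ᵐ x : ℝ, v x = 0 ∨ (x : ℂ) = t := by
        filter_upwards [hc] with x hx
        rcases eq_or_ne (v x) 0 with h | h
        · exact Or.inl h
        · right
          have hvx : (v x : ℂ) ≠ 0 := by exact_mod_cast h
          have : (v x : ℂ) * ((M2 - c) - 2 * (x : ℂ) * M1) = 0 := by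
            rw [mul_sub]
            rw [show (v x : ℂ) * (M2 - c) = (v x : ℂ) * (M2 - 2 * (x : ℂ) * M1)
                - (v x : ℂ) * c + (v x : ℂ) * (2 * (x : ℂ) * M1) by ring, hx]
            ring
          have h2 : (M2 - c) - 2 * (x : ℂ) * M1 = 0 := by
            rcases mul_eq_zero.mp this with h' | h'
            · exact absurd h' hvx
            · exact h'
          rw [ht, eq_div_iff h2M1]
          linear_combination -h2
      have hsing : ∀ᵐ x : ℝ, ¬((x : ℂ) = t) := by
        have hnull : volume {x : ℝ | (x : ℂ) = t} = 0 := by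
          refine measure_mono_null (fun x hx => ?_) (measure_singleton t.re)
          simp only [mem_setOf_eq] at hx
          simp only [mem_singleton_iff]
          rw [← hx, Complex.ofReal_re]
        rw [ae_iff]
        simp only [not_not]
        exact hnull
      apply hv_ne
      filter_upwards [hae, hsing] with x hx1 hx2
      simpa using hx1.resolve_right hx2
    · intro hM1
      refine ⟨M2, ?_⟩
      filter_upwards with x
      rw [hM1]
      ring
end

section
/- Let V : ℝ → ℝ be measurable with |V(x)| ≤ C₀(1+|x|)^{−β} for some β > 25 and C₀ > 0; set v = |V|^{1/2} and let U : ℝ → {−1, 1} satisfy V = U v². If f ∈ L²(ℝ) satisfies ∫_ℝ x^k v(x) f(x) dx = 0 for k = 0, 1, 2, 3 and U(x) f(x) + (1/12) v(x) ∫_ℝ |x−y|³ v(y) f(y) dy = 0 for a.e. x ∈ ℝ, then f = 0 a.e. In other words, S₃L²(ℝ) = {0}. -/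
open MeasureTheory Set Filter

private lemma l2_mul_integrable {g h : ℝ → ℝ} (hg : MemLp g 2 (volume : Measure ℝ))
    (hh : MemLp h 2 (volume : Measure ℝ)) :
    Integrable (fun y => g y * h y) (volume : Measure ℝ) := by
  refine Integrable.mono' ((hg.integrable_sq.add hh.integrable_sq).div_const 2)
    (hg.aestronglyMeasurable.mul hh.aestronglyMeasurable) (Eventually.of_forall fun y => ?_)
  simp only [Pi.add_apply, Real.norm_eq_abs, abs_mul]
  nlinarith [sq_nonneg (|g y| - |h y|), sq_abs (g y), sq_abs (h y), abs_nonneg (g y),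
    abs_nonneg (h y)]

set_option maxHeartbeats 1000000 in
/-- Lemma 3.4: absence of the space `S₃L²(ℝ)`. If
`|V(x)| ≤ C₀(1+|x|)^{-β}` with `β > 25`, `v = |V|^{1/2}`, `U ∈ {−1,1}` with `V = Uv²`,
and `f ∈ L²(ℝ)` satisfies the four moment conditions `∫ x^k v f = 0` (`k = 0,1,2,3`)
together with `T₀f = 0` a.e., where
`(T₀f)(x) = U(x)f(x) + (1/12) v(x) ∫ |x−y|³ v(y) f(y) dy`, then `f = 0` a.e.
In other words, `S₃L²(ℝ) = {0}`. -/
theorem stmt14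
    (V : ℝ → ℝ) (hV_meas : Measurable V)
    (β C₀ : ℝ) (hβ : 25 < β) (hC₀ : 0 < C₀)
    (hV_decay : ∀ x : ℝ, |V x| ≤ C₀ * (1 + |x|) ^ (-β))
    (v : ℝ → ℝ) (hv : ∀ x, v x = Real.sqrt |V x|)
    (U : ℝ → ℝ) (hU : ∀ x, U x = 1 ∨ U x = -1) (hUV : ∀ x, V x = U x * (v x) ^ 2)
    (f : ℝ → ℂ) (hf : MemLp f 2 (volume : Measure ℝ))
    (hmom : ∀ k : ℕ, k ≤ 3 → (∫ x : ℝ, (x : ℂ) ^ k * (v x : ℂ) * f x) = 0)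
    (hT₀ : ∀ᵐ x : ℝ ∂volume,
      (U x : ℂ) * f x +
        (1/12 : ℂ) * (v x : ℂ) * ∫ y : ℝ, ((|x - y| ^ 3 : ℝ) : ℂ) * (v y : ℂ) * f y = 0) :
    f =ᵐ[volume] 0 := by
  classical
  -- replace f by a strongly measurable representative g
  have hfm := hf.aestronglyMeasurable
  set g : ℝ → ℂ := hfm.mk f with hg_def
  have hgm : StronglyMeasurable g := hfm.stronglyMeasurable_mk
  have hfg : f =ᵐ[volume] g := hfm.ae_eq_mk
  suffices hg0 : g =ᵐ[volume] 0 from hfg.trans hg0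
  have hg2 : MemLp g 2 (volume : Measure ℝ) := hf.ae_eq hfg
  -- basic facts about v
  have hv_meas : Measurable v := by
    have hveq : v = fun x => Real.sqrt |V x| := funext hv
    rw [hveq]; exact (hV_meas.abs).sqrt
  have hv_nonneg : ∀ x, 0 ≤ v x := fun x => by rw [hv x]; exact Real.sqrt_nonneg _
  -- definition of w
  set w : ℝ → ℂ := fun y => (v y : ℂ) * g y with hw_def
  have hw_meas : Measurable w :=
    (Complex.measurable_ofReal.comp hv_meas).mul hgm.measurable
  have hw_norm : ∀ y, ‖w y‖ = v y * ‖g y‖ := by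
    intro y
    rw [hw_def]
    simp only [norm_mul, Complex.norm_real, Real.norm_eq_abs, abs_of_nonneg (hv_nonneg y)]
  -- pointwise bound on v
  have hv_bound : ∀ y : ℝ, v y ≤ Real.sqrt C₀ * (1 + |y|) ^ (-(β/2)) := by
    intro y
    have h1 : (0:ℝ) < 1 + |y| := by positivity
    have h2 : v y ≤ Real.sqrt (C₀ * (1 + |y|) ^ (-β)) := by
      rw [hv y]; exact Real.sqrt_le_sqrt (hV_decay y)
    have h3 : Real.sqrt ((1 + |y|) ^ (-β)) = (1 + |y|) ^ (-(β/2)) := by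
      rw [Real.sqrt_eq_rpow, ← Real.rpow_mul h1.le]
      congr 1; ring
    calc v y ≤ Real.sqrt (C₀ * (1 + |y|) ^ (-β)) := h2
      _ = Real.sqrt C₀ * (1 + |y|) ^ (-(β/2)) := by rw [Real.sqrt_mul hC₀.le, h3]
  -- the L² majorant
  have hq : Integrable (fun y : ℝ => (1 + |y|) ^ (6 - β)) volume := by
    have h := integrable_one_add_norm (E := ℝ) (μ := volume) (r := β - 6) (by simp; linarith)
    simpa [Real.norm_eq_abs, show -(β-6) = 6-β by ring] using h
  have hmaj : Integrable (fun y : ℝ => (1 + |y|) ^ (3 - β/2) * ‖g y‖) volume := by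
    have hm : Measurable fun y : ℝ => (1 + |y|) ^ (3 - β/2) := by fun_prop
    have hgmaj : MemLp (fun y : ℝ => (1 + |y|) ^ (3 - β/2)) 2 (volume : Measure ℝ) := by
      rw [memLp_two_iff_integrable_sq hm.aestronglyMeasurable]
      refine hq.congr (Eventually.of_forall fun y => ?_)
      have h1 : (0:ℝ) ≤ 1 + |y| := by positivity
      show (1 + |y|) ^ (6 - β) = ((1 + |y|) ^ (3 - β/2)) ^ 2
      rw [← Real.rpow_natCast ((1+|y|) ^ (3 - β/2)) 2, ← Real.rpow_mul h1]
      congr 1; ring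
    exact l2_mul_integrable hgmaj hg2.norm
  -- master integrability lemma
  have hIntC : ∀ (φ : ℝ → ℝ) (D : ℝ), Measurable φ →
      (∀ y, |φ y| ≤ D * (1 + |y|) ^ (3:ℕ)) →
      Integrable (fun y => (φ y : ℂ) * w y) volume := by
    intro φ D hφm hφb
    have hD : 0 ≤ D := by
      have h0 := (abs_nonneg (φ 0)).trans (hφb 0)
      simpa using h0
    refine Integrable.mono' (hmaj.const_mul (D * Real.sqrt C₀))
      ((Complex.measurable_ofReal.comp hφm).mul hw_meas).aestronglyMeasurable
      (Eventually.of_forall fun y => ?_)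
    have h1 : (0:ℝ) < 1 + |y| := by positivity
    have hnorm : ‖(φ y : ℂ) * w y‖ = |φ y| * (v y * ‖g y‖) := by
      rw [norm_mul, hw_norm y, Complex.norm_real, Real.norm_eq_abs]
    rw [hnorm]
    have key : ((1 + |y|) ^ (3:ℕ) : ℝ) * (1 + |y|) ^ (-(β/2)) = (1 + |y|) ^ (3 - β/2) := by
      rw [← Real.rpow_natCast (1+|y|) 3, ← Real.rpow_add h1]
      congr 1
    calc |φ y| * (v y * ‖g y‖)
        ≤ (D * (1+|y|) ^ (3:ℕ)) * ((Real.sqrt C₀ * (1+|y|) ^ (-(β/2))) * ‖g y‖) := by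
          refine mul_le_mul (hφb y) ?_ (mul_nonneg (hv_nonneg y) (norm_nonneg _))
            (mul_nonneg hD (by positivity))
          exact mul_le_mul_of_nonneg_right (hv_bound y) (norm_nonneg _)
      _ = (D * Real.sqrt C₀) * ((1 + |y|) ^ (3 - β/2) * ‖g y‖) := by rw [← key]; ring
  -- real version
  have hIntR : ∀ (φ : ℝ → ℝ) (D : ℝ), Measurable φ → (∀ y, 0 ≤ φ y) →
      (∀ y, φ y ≤ D * (1 + |y|) ^ (3:ℕ)) →
      Integrable (fun y => φ y * ‖w y‖) volume := by
    intro φ D hφm hφ0 hφb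
    have h := (hIntC φ D hφm (fun y => by rw [abs_of_nonneg (hφ0 y)]; exact hφb y)).norm
    refine h.congr (Eventually.of_forall fun y => ?_)
    show ‖(φ y : ℂ) * w y‖ = φ y * ‖w y‖
    rw [norm_mul, Complex.norm_real, Real.norm_eq_abs, abs_of_nonneg (hφ0 y)]
  -- an elementary bound
  have habs : ∀ x y : ℝ, |y - x| ≤ (1+|x|)*(1+|y|) := by
    intro x y
    have h1 : |y - x| ≤ |y| + |x| := by
      rw [sub_eq_add_neg]
      exact (abs_add_le _ _).trans (by rw [abs_neg])
    nlinarith [abs_nonneg x, abs_nonneg y]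
  -- moments of w vanish
  have hmom' : ∀ k : ℕ, k ≤ 3 → (∫ y : ℝ, (y:ℂ)^k * w y) = 0 := by
    intro k hk
    have h1 : (∫ y : ℝ, (y:ℂ)^k * w y) = ∫ y : ℝ, (y:ℂ)^k * (v y : ℂ) * f y := by
      refine integral_congr_ae ?_
      filter_upwards [hfg] with y hy
      rw [hw_def]
      simp only [mul_assoc, hy]
    rw [h1]; exact hmom k hk
  have hIk : ∀ k : ℕ, k ≤ 3 → Integrable (fun y : ℝ => (y:ℂ)^k * w y) volume := by
    intro k hk
    have h := hIntC (fun y => y^k) 1 (measurable_id.pow_const k) (fun y => by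
      rw [one_mul, abs_pow]
      calc |y|^k ≤ (1+|y|)^k := pow_le_pow_left₀ (abs_nonneg y) (by linarith [abs_nonneg y]) k
        _ ≤ (1+|y|) ^ (3:ℕ) := pow_le_pow_right₀ (by linarith [abs_nonneg y]) hk)
    exact h.congr (Eventually.of_forall fun y => by push_cast; ring)
  -- the cubic moment integral vanishes
  have hcube : ∀ x : ℝ, (∫ y : ℝ, ((x:ℂ) - (y:ℂ))^3 * w y) = 0 := by
    intro x
    have hexp : (fun y : ℝ => ((x:ℂ) - (y:ℂ))^3 * w y)
        = fun y : ℝ => ((x:ℂ)^3 * ((y:ℂ)^0 * w y) + (-(3*(x:ℂ)^2)) * ((y:ℂ)^1 * w y))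
          + ((3*(x:ℂ)) * ((y:ℂ)^2 * w y) + (-1:ℂ) * ((y:ℂ)^3 * w y)) := by
      funext y; ring
    have i0 := (hIk 0 (by norm_num)).const_mul ((x:ℂ)^3)
    have i1 := (hIk 1 (by norm_num)).const_mul (-(3*(x:ℂ)^2))
    have i2 := (hIk 2 (by norm_num)).const_mul (3*(x:ℂ))
    have i3 := (hIk 3 le_rfl).const_mul (-1:ℂ)
    calc (∫ y : ℝ, ((x:ℂ) - (y:ℂ))^3 * w y)
        = ∫ y : ℝ, ((x:ℂ)^3 * ((y:ℂ)^0 * w y) + (-(3*(x:ℂ)^2)) * ((y:ℂ)^1 * w y))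
            + ((3*(x:ℂ)) * ((y:ℂ)^2 * w y) + (-1:ℂ) * ((y:ℂ)^3 * w y)) := by rw [hexp]
      _ = (∫ y : ℝ, ((x:ℂ)^3 * ((y:ℂ)^0 * w y) + (-(3*(x:ℂ)^2)) * ((y:ℂ)^1 * w y)))
            + ∫ y : ℝ, ((3*(x:ℂ)) * ((y:ℂ)^2 * w y) + (-1:ℂ) * ((y:ℂ)^3 * w y)) :=
          integral_add (i0.add i1) (i2.add i3)
      _ = ((∫ y : ℝ, (x:ℂ)^3 * ((y:ℂ)^0 * w y))
            + ∫ y : ℝ, (-(3*(x:ℂ)^2)) * ((y:ℂ)^1 * w y))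
            + ((∫ y : ℝ, (3*(x:ℂ)) * ((y:ℂ)^2 * w y))
            + ∫ y : ℝ, (-1:ℂ) * ((y:ℂ)^3 * w y)) := by
          rw [integral_add i0 i1, integral_add i2 i3]
      _ = 0 := by
          rw [integral_const_mul, integral_const_mul, integral_const_mul, integral_const_mul,
            hmom' 0 (by norm_num), hmom' 1 (by norm_num), hmom' 2 (by norm_num),
            hmom' 3 le_rfl]
          simp
  -- definition of ψ
  set Φ : ℝ × ℝ → ℂ := fun p => ((max (p.2 - p.1) 0 ^ 3 : ℝ) : ℂ) * w p.2 with hΦ_def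
  have hΦm : Measurable Φ := by
    apply Measurable.mul
    · exact Complex.measurable_ofReal.comp
        (((measurable_snd.sub measurable_fst).max measurable_const).pow_const 3)
    · exact hw_meas.comp measurable_snd
  set ψ : ℝ → ℂ := fun x => (6:ℂ)⁻¹ * ∫ y : ℝ, Φ (x, y) with hψ_def
  have hψm : Measurable ψ :=
    measurable_const.mul (hΦm.stronglyMeasurable.integral_prod_right').measurable
  -- integrability of the Φ-integrand
  have hΦint : ∀ x : ℝ, Integrable (fun y : ℝ => Φ (x, y)) volume := by
    intro x
    refine hIntC (fun y => max (y - x) 0 ^ 3) ((1+|x|) ^ (3:ℕ))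
      (((measurable_id.sub_const x).max measurable_const).pow_const 3) (fun y => ?_)
    rw [abs_pow]
    have h1 : |max (y - x) 0| ≤ (1+|x|)*(1+|y|) := by
      rw [abs_of_nonneg (le_max_right _ _)]
      rcases le_total (y - x) 0 with h | h
      · rw [max_eq_right h]; positivity
      · rw [max_eq_left h]
        exact (le_abs_self _).trans (habs x y)
    calc |max (y-x) 0|^3 ≤ ((1+|x|)*(1+|y|))^3 := pow_le_pow_left₀ (abs_nonneg _) h1 3
      _ = (1+|x|) ^ (3:ℕ) * (1+|y|) ^ (3:ℕ) := mul_pow _ _ 3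
  -- kernel identity
  have hker : ∀ x y : ℝ, (|x - y| ^ 3 : ℝ) = (x - y)^3 + 2 * max (y - x) 0 ^ 3 := by
    intro x y
    rcases le_total y x with h | h
    · rw [abs_of_nonneg (by linarith : (0:ℝ) ≤ x - y), max_eq_right (by linarith : y - x ≤ 0)]
      ring
    · rw [abs_of_nonpos (by linarith : x - y ≤ 0), max_eq_left (by linarith : (0:ℝ) ≤ y - x)]
      ring
  -- representation of the T₀ integral in terms of ψ
  have hrep : ∀ x : ℝ, (∫ y : ℝ, ((|x - y| ^ 3 : ℝ) : ℂ) * w y) = 12 * ψ x := by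
    intro x
    have hintcube : Integrable (fun y : ℝ => ((x:ℂ) - (y:ℂ))^3 * w y) volume := by
      refine (hIntC (fun y => (x - y)^3) ((1+|x|) ^ (3:ℕ))
        ((measurable_const.sub measurable_id).pow_const 3) (fun y => ?_)).congr
        (Eventually.of_forall fun y => by push_cast; ring)
      rw [abs_pow]
      have h1 : |x - y| ≤ (1+|x|)*(1+|y|) := by rw [abs_sub_comm]; exact habs x y
      calc |x-y|^3 ≤ ((1+|x|)*(1+|y|))^3 := pow_le_pow_left₀ (abs_nonneg _) h1 3
        _ = (1+|x|) ^ (3:ℕ) * (1+|y|) ^ (3:ℕ) := mul_pow _ _ 3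
    have hsplit : (fun y : ℝ => ((|x - y| ^ 3 : ℝ) : ℂ) * w y)
        = fun y : ℝ => ((x:ℂ) - (y:ℂ))^3 * w y + 2 * Φ (x, y) := by
      funext y
      rw [hΦ_def]
      show ((|x - y| ^ 3 : ℝ) : ℂ) * w y
        = ((x:ℂ) - (y:ℂ))^3 * w y + 2 * (((max (y - x) 0 ^ 3 : ℝ) : ℂ) * w y)
      rw [hker x y]
      push_cast
      ring
    rw [hsplit, integral_add hintcube ((hΦint x).const_mul 2), hcube x, integral_const_mul,
      hψ_def]
    show 0 + 2 * ∫ y : ℝ, Φ (x, y) = 12 * ((6:ℂ)⁻¹ * ∫ y : ℝ, Φ (x, y))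
    ring
  -- a.e. identity for g and w
  have hT₀' : ∀ᵐ x : ℝ ∂volume, (U x : ℂ) * g x + (v x : ℂ) * ψ x = 0 := by
    filter_upwards [hT₀, hfg] with x hx hfx
    have hinner : (∫ y : ℝ, ((|x - y| ^ 3 : ℝ) : ℂ) * (v y : ℂ) * f y) = 12 * ψ x := by
      rw [← hrep x]
      refine integral_congr_ae ?_
      filter_upwards [hfg] with y hy
      rw [hw_def]
      simp only [mul_assoc, hy]
    rw [hfx, hinner] at hx
    calc (U x : ℂ) * g x + (v x : ℂ) * ψ x
        = (U x : ℂ) * g x + (1/12 : ℂ) * (v x : ℂ) * (12 * ψ x) := by ring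
      _ = 0 := hx
  have hgae : ∀ᵐ x : ℝ ∂volume, g x = -((U x : ℂ) * (v x : ℂ) * ψ x) := by
    filter_upwards [hT₀'] with x hx
    have hU2 : (U x : ℂ) * (U x : ℂ) = 1 := by
      rcases hU x with h | h <;> rw [h] <;> norm_num
    have h2 : (U x : ℂ) * g x = -((v x : ℂ) * ψ x) := by linear_combination hx
    calc g x = ((U x : ℂ) * (U x : ℂ)) * g x := by rw [hU2, one_mul]
      _ = (U x : ℂ) * ((U x : ℂ) * g x) := by ring
      _ = (U x : ℂ) * (-((v x : ℂ) * ψ x)) := by rw [h2]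
      _ = -((U x : ℂ) * (v x : ℂ) * ψ x) := by ring
  have hwae : ∀ᵐ x : ℝ ∂volume, w x = -((V x : ℂ) * ψ x) := by
    filter_upwards [hgae] with x hx
    have hV' : ((V x : ℝ) : ℂ) = (U x : ℂ) * (v x : ℂ)^2 := by
      rw [hUV x]; push_cast; ring
    rw [hw_def]
    show (v x : ℂ) * g x = -((V x : ℂ) * ψ x)
    rw [hx, hV']
    ring
  -- set-integral representation of ψ
  have hψ_eq : ∀ x : ℝ, ψ x = (6:ℂ)⁻¹ * ∫ y in Ioi x, Φ (x, y) := by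
    intro x
    rw [hψ_def]
    show (6:ℂ)⁻¹ * ∫ y : ℝ, Φ (x, y) = (6:ℂ)⁻¹ * ∫ y in Ioi x, Φ (x, y)
    congr 1
    refine (setIntegral_eq_integral_of_forall_compl_eq_zero (fun y hy => ?_)).symm
    have h1 : y - x ≤ 0 := by
      simp only [mem_Ioi, not_lt] at hy
      linarith
    rw [hΦ_def]
    show ((max (y - x) 0 ^ 3 : ℝ) : ℂ) * w y = 0
    rw [max_eq_right h1]
    norm_num
  have hΦnorm : ∀ x y : ℝ, x < y → ‖Φ (x, y)‖ = |y - x|^3 * ‖w y‖ := by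
    intro x y hxy
    rw [hΦ_def]
    show ‖((max (y - x) 0 ^ 3 : ℝ) : ℂ) * w y‖ = |y - x|^3 * ‖w y‖
    rw [norm_mul, Complex.norm_real, Real.norm_eq_abs, abs_pow,
      max_eq_left (by linarith : (0:ℝ) ≤ y - x)]
  have hn6 : ‖(6:ℂ)⁻¹‖ = (6:ℝ)⁻¹ := by
    rw [norm_inv]
    norm_num
  -- integrability of the norm kernel
  have hKint : ∀ x : ℝ, Integrable (fun y : ℝ => |y - x|^3 * ‖w y‖) volume := by
    intro x
    refine hIntR (fun y => |y - x|^3) ((1+|x|) ^ (3:ℕ))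
      ((measurable_id.sub_const x).abs.pow_const 3) (fun y => by positivity) (fun y => ?_)
    calc |y-x|^3 ≤ ((1+|x|)*(1+|y|))^3 := pow_le_pow_left₀ (abs_nonneg _) (habs x y) 3
      _ = (1+|x|) ^ (3:ℕ) * (1+|y|) ^ (3:ℕ) := mul_pow _ _ 3
  -- norm bound for ψ
  have hnψ : ∀ x : ℝ, ‖ψ x‖ ≤ 6⁻¹ * ∫ y in Ioi x, |y - x|^3 * ‖w y‖ := by
    intro x
    rw [hψ_eq x, norm_mul, hn6]
    refine mul_le_mul_of_nonneg_left ?_ (by norm_num)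
    calc ‖∫ y in Ioi x, Φ (x, y)‖ ≤ ∫ y in Ioi x, ‖Φ (x, y)‖ :=
        norm_integral_le_integral_norm _
      _ = ∫ y in Ioi x, |y - x|^3 * ‖w y‖ :=
        setIntegral_congr_fun measurableSet_Ioi (fun y hy => hΦnorm x y hy)
  -- the constant A
  have hcube_int : Integrable (fun y : ℝ => |y|^3 * ‖w y‖) volume := by
    refine hIntR (fun y => |y|^3) 1 (measurable_abs.pow_const 3) (fun y => by positivity)
      (fun y => ?_)
    rw [one_mul]
    exact pow_le_pow_left₀ (abs_nonneg y) (by linarith [abs_nonneg y]) 3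
  set A : ℝ := 6⁻¹ * ∫ y : ℝ, |y|^3 * ‖w y‖ with hA_def
  have hA0 : 0 ≤ A := by
    apply mul_nonneg (by norm_num)
    exact integral_nonneg fun y => by positivity
  -- choice of x₀
  have hβ4 : (0:ℝ) < β - 4 := by linarith
  obtain ⟨x₀, hx₀1, hx₀s⟩ : ∃ x₀ : ℝ, 1 ≤ x₀ ∧ C₀ * x₀ ^ (4 - β) ≤ 3 * (β - 4) := by
    have ht : Tendsto (fun x : ℝ => x ^ (4 - β)) atTop (nhds 0) := by
      have h := tendsto_rpow_neg_atTop hβ4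
      simpa [show -(β-4) = 4 - β by ring] using h
    have hev : ∀ᶠ x : ℝ in atTop, x ^ (4-β) < 3*(β-4)/C₀ :=
      ht.eventually_lt_const (by positivity)
    obtain ⟨x₀, h1, h2⟩ := (hev.and (eventually_ge_atTop 1)).exists
    refine ⟨x₀, h2, ?_⟩
    have h3 := (lt_div_iff₀ hC₀).mp h1
    linarith
  -- right-hand decay: ψ = 0 on [x₀, ∞)
  have claim1 : ∀ n : ℕ, ∀ x : ℝ, x₀ ≤ x → ‖ψ x‖ ≤ A / 2^n := by
    intro n
    induction n with
    | zero =>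
      intro x hx
      have hx1 : (1:ℝ) ≤ x := le_trans hx₀1 hx
      calc ‖ψ x‖ ≤ 6⁻¹ * ∫ y in Ioi x, |y - x|^3 * ‖w y‖ := hnψ x
        _ ≤ 6⁻¹ * ∫ y in Ioi x, |y|^3 * ‖w y‖ := by
            refine mul_le_mul_of_nonneg_left ?_ (by norm_num)
            refine setIntegral_mono_on (hKint x).integrableOn hcube_int.integrableOn
              measurableSet_Ioi (fun y hy => ?_)
            have hy' : x < y := hy
            have h2 : |y - x| ≤ |y| := by
              rw [abs_of_nonneg (by linarith : (0:ℝ) ≤ y - x),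
                abs_of_nonneg (by linarith : (0:ℝ) ≤ y)]
              linarith
            exact mul_le_mul_of_nonneg_right (pow_le_pow_left₀ (abs_nonneg _) h2 3)
              (norm_nonneg _)
        _ ≤ 6⁻¹ * ∫ y : ℝ, |y|^3 * ‖w y‖ := by
            refine mul_le_mul_of_nonneg_left
              (setIntegral_le_integral hcube_int (Eventually.of_forall fun y => by positivity))
              (by norm_num)
        _ = A / 2^0 := by rw [hA_def]; norm_num
    | succ n ih =>
      intro x hx
      have hx1 : (1:ℝ) ≤ x := le_trans hx₀1 hx
      have hxpos : (0:ℝ) < x := by linarith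
      have hlt : 3 - β < -1 := by linarith
      have hIright : IntegrableOn (fun y : ℝ => C₀ * (A/2^n) * y ^ (3-β)) (Ioi x) volume :=
        (integrableOn_Ioi_rpow_of_lt hlt hxpos).const_mul _
      have hstep : (∫ y in Ioi x, |y - x|^3 * ‖w y‖)
          ≤ ∫ y in Ioi x, C₀ * (A/2^n) * y ^ (3-β) := by
        refine setIntegral_mono_ae_restrict (hKint x).integrableOn hIright ?_
        filter_upwards [ae_restrict_of_ae hwae, ae_restrict_mem measurableSet_Ioi] with y hwy hy
        have hyx : x < y := hy
        have hy0 : (0:ℝ) < y := by linarith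
        have h1 : ‖w y‖ ≤ C₀ * y ^ (-β) * (A/2^n) := by
          rw [hwy, norm_neg, norm_mul, Complex.norm_real, Real.norm_eq_abs]
          have hV1 : |V y| ≤ C₀ * y ^ (-β) := by
            refine (hV_decay y).trans (mul_le_mul_of_nonneg_left ?_ hC₀.le)
            refine Real.rpow_le_rpow_of_nonpos hy0 ?_ (by linarith)
            rw [abs_of_pos hy0]; linarith
          have hψy : ‖ψ y‖ ≤ A/2^n := ih y (le_trans hx hyx.le)
          calc |V y| * ‖ψ y‖ ≤ (C₀ * y ^ (-β)) * (A/2^n) :=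
              mul_le_mul hV1 hψy (norm_nonneg _) (mul_nonneg hC₀.le (Real.rpow_nonneg hy0.le _))
            _ = C₀ * y ^ (-β) * (A/2^n) := by ring
        have h2 : |y - x|^3 ≤ y ^ (3:ℝ) := by
          rw [show y ^ (3:ℝ) = y ^ (3:ℕ) from Real.rpow_natCast y 3]
          refine pow_le_pow_left₀ (abs_nonneg _) ?_ 3
          rw [abs_of_nonneg (by linarith : (0:ℝ) ≤ y - x)]
          linarith
        calc |y - x|^3 * ‖w y‖ ≤ y ^ (3:ℝ) * (C₀ * y ^ (-β) * (A/2^n)) :=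
              mul_le_mul h2 h1 (norm_nonneg _) (Real.rpow_nonneg hy0.le _)
          _ = C₀ * (A/2^n) * (y ^ (3:ℝ) * y ^ (-β)) := by ring
          _ = C₀ * (A/2^n) * y ^ (3-β) := by
              rw [← Real.rpow_add hy0, show (3:ℝ) + -β = 3 - β by ring]
      have hval : (∫ y in Ioi x, C₀ * (A/2^n) * y ^ (3-β))
          = C₀ * (A/2^n) * (x ^ (4-β) / (β-4)) := by
        rw [integral_const_mul, integral_Ioi_rpow_of_lt hlt hxpos]
        congr 1
        rw [show (3 - β + 1) = 4 - β by ring, show (4-β) = -(β-4) by ring, neg_div_neg_eq]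
      calc ‖ψ x‖ ≤ 6⁻¹ * ∫ y in Ioi x, |y - x|^3 * ‖w y‖ := hnψ x
        _ ≤ 6⁻¹ * (C₀ * (A/2^n) * (x ^ (4-β) / (β-4))) := by
            rw [← hval]
            exact mul_le_mul_of_nonneg_left hstep (by norm_num)
        _ ≤ A / 2^(n+1) := by
            have hxe : x ^ (4-β) ≤ x₀ ^ (4-β) :=
              Real.rpow_le_rpow_of_nonpos (by linarith) hx (by linarith)
            have h30 : C₀ * x ^ (4-β) ≤ 3*(β-4) :=
              le_trans (mul_le_mul_of_nonneg_left hxe hC₀.le) hx₀s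
            have ht0 : (0:ℝ) ≤ A/2^n := div_nonneg hA0 (by positivity)
            have hd6 : (0:ℝ) < 6*(β-4) := by linarith
            have hne : β - 4 ≠ 0 := ne_of_gt hβ4
            calc 6⁻¹ * (C₀ * (A/2^n) * (x ^ (4-β) / (β-4)))
                = (A/2^n) * ((C₀ * x ^ (4-β)) / (6*(β-4))) := by
                  field_simp
              _ ≤ (A/2^n) * ((3*(β-4)) / (6*(β-4))) := by
                  refine mul_le_mul_of_nonneg_left ((div_le_div_iff_of_pos_right hd6).mpr h30) ht0
              _ = (A/2^n) / 2 := by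
                  rw [show (3*(β-4)) / (6*(β-4)) = 1/2 by field_simp; ring]
                  ring
              _ = A / 2^(n+1) := by rw [div_div, ← pow_succ]
  have hψ_right : ∀ x : ℝ, x₀ ≤ x → ψ x = 0 := by
    intro x hx
    have htend : Tendsto (fun n : ℕ => A / 2^n) atTop (nhds 0) := by
      have h := (tendsto_pow_atTop_nhds_zero_of_lt_one (by norm_num : (0:ℝ) ≤ 1/2)
        (by norm_num : (1/2:ℝ) < 1)).const_mul A
      rw [mul_zero] at h
      refine h.congr (fun n => ?_)
      rw [div_pow, one_pow, mul_one_div]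
    have h0 : ‖ψ x‖ ≤ 0 :=
      ge_of_tendsto htend (Eventually.of_forall fun n => claim1 n x hx)
    exact norm_le_zero_iff.mp h0
  -- ψ vanishes everywhere
  have hψ_all : ∀ x : ℝ, ψ x = 0 := by
    intro a
    rcases le_or_gt x₀ a with hax | hax
    · exact hψ_right a hax
    -- uniform bound on ψ
    have hPint : Integrable (fun y : ℝ => (1+|y|) ^ (3:ℕ) * ‖w y‖) volume :=
      hIntR _ 1 ((measurable_const.add measurable_abs).pow_const 3)
        (fun y => by positivity) (fun y => by rw [one_mul])
    set Cw : ℝ := 6⁻¹ * ∫ y : ℝ, (1+|y|) ^ (3:ℕ) * ‖w y‖ with hCw_def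
    have hCw0 : 0 ≤ Cw := by
      apply mul_nonneg (by norm_num)
      exact integral_nonneg fun y => by positivity
    have hψb : ∀ x : ℝ, ‖ψ x‖ ≤ (1+|x|) ^ (3:ℕ) * Cw := by
      intro x
      calc ‖ψ x‖ ≤ 6⁻¹ * ∫ y in Ioi x, |y - x|^3 * ‖w y‖ := hnψ x
        _ ≤ 6⁻¹ * ∫ y in Ioi x, (1+|x|) ^ (3:ℕ) * ((1+|y|) ^ (3:ℕ) * ‖w y‖) := by
            refine mul_le_mul_of_nonneg_left ?_ (by norm_num)
            refine setIntegral_mono_on (hKint x).integrableOn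
              ((hPint.const_mul _).integrableOn) measurableSet_Ioi (fun y _ => ?_)
            calc |y-x|^3 * ‖w y‖ ≤ ((1+|x|)*(1+|y|))^3 * ‖w y‖ :=
                mul_le_mul_of_nonneg_right (pow_le_pow_left₀ (abs_nonneg _) (habs x y) 3)
                  (norm_nonneg _)
              _ = (1+|x|) ^ (3:ℕ) * ((1+|y|) ^ (3:ℕ) * ‖w y‖) := by ring
        _ ≤ 6⁻¹ * ((1+|x|) ^ (3:ℕ) * ∫ y : ℝ, (1+|y|) ^ (3:ℕ) * ‖w y‖) := by
            rw [integral_const_mul]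
            refine mul_le_mul_of_nonneg_left (mul_le_mul_of_nonneg_left
              (setIntegral_le_integral hPint
                (Eventually.of_forall fun y => by positivity)) (by positivity)) (by norm_num)
        _ = (1+|x|) ^ (3:ℕ) * Cw := by rw [hCw_def]; ring
    set c : ℝ := max |a| |x₀| with hc_def
    set B : ℝ := (1 + c) ^ (3:ℕ) * Cw with hB_def
    have hc0 : 0 ≤ c := le_trans (abs_nonneg a) (le_max_left _ _)
    have hB0 : 0 ≤ B := mul_nonneg (pow_nonneg (by linarith) 3) hCw0
    have hBb : ∀ y ∈ Icc a x₀, ‖ψ y‖ ≤ B := by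
      intro y hy
      refine (hψb y).trans ?_
      rw [hB_def]
      refine mul_le_mul_of_nonneg_right ?_ hCw0
      refine pow_le_pow_left₀ (by positivity) ?_ 3
      have h1 : |y| ≤ c := by
        refine abs_le.mpr ⟨?_, ?_⟩
        · have h2 := neg_abs_le a
          have h3 := le_max_left |a| |x₀|
          have := hy.1
          rw [hc_def]
          linarith
        · have h2 := le_abs_self x₀
          have h3 := le_max_right |a| |x₀|
          have := hy.2
          rw [hc_def]
          linarith
      linarith
    set K : ℝ := C₀ * (x₀ - a) ^ (3:ℕ) / 6 with hK_def
    have hK0 : 0 ≤ K := by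
      rw [hK_def]
      have : (0:ℝ) ≤ (x₀ - a) ^ (3:ℕ) := pow_nonneg (by linarith) 3
      positivity
    have hw0 : ∀ᵐ y : ℝ ∂volume, y ∈ Ioi x₀ → w y = 0 := by
      filter_upwards [hwae] with y hy hy'
      rw [hy, hψ_right y (le_of_lt hy'), mul_zero, neg_zero]
    -- the Volterra estimate
    have key : ∀ x ∈ Icc a x₀, ‖ψ x‖ ≤ K * ∫ y in Ioc x x₀, ‖ψ y‖ := by
      intro x hx
      have hIψx : IntegrableOn (fun y : ℝ => ‖ψ y‖) (Ioc x x₀) volume := by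
        refine Measure.integrableOn_of_bounded (M := B) measure_Ioc_lt_top.ne
          hψm.norm.aestronglyMeasurable ?_
        filter_upwards [ae_restrict_mem measurableSet_Ioc] with y hy
        rw [norm_norm]
        exact hBb y ⟨le_trans hx.1 hy.1.le, hy.2⟩
      have hsplit : (∫ y in Ioi x, Φ (x, y)) = ∫ y in Ioc x x₀, Φ (x, y) := by
        rw [← Ioc_union_Ioi_eq_Ioi hx.2,
          setIntegral_union Ioc_disjoint_Ioi_same measurableSet_Ioi
            (hΦint x).integrableOn (hΦint x).integrableOn]
        have hz : (∫ y in Ioi x₀, Φ (x, y)) = 0 := by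
          refine integral_eq_zero_of_ae ?_
          filter_upwards [ae_restrict_of_ae hw0, ae_restrict_mem measurableSet_Ioi]
            with y h1 h2
          show Φ (x, y) = 0
          rw [hΦ_def]
          show ((max (y - x) 0 ^ 3 : ℝ) : ℂ) * w y = 0
          rw [h1 h2, mul_zero]
        rw [hz, add_zero]
      have hψx2 : ‖ψ x‖ ≤ 6⁻¹ * ∫ y in Ioc x x₀, |y - x|^3 * ‖w y‖ := by
        rw [hψ_eq x, hsplit, norm_mul, hn6]
        refine mul_le_mul_of_nonneg_left ?_ (by norm_num)
        refine (norm_integral_le_integral_norm _).trans_eq ?_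
        refine setIntegral_congr_fun measurableSet_Ioc (fun y hy => hΦnorm x y hy.1)
      refine hψx2.trans ?_
      have hmono : (∫ y in Ioc x x₀, |y - x|^3 * ‖w y‖)
          ≤ ∫ y in Ioc x x₀, (x₀ - a) ^ (3:ℕ) * (C₀ * ‖ψ y‖) := by
        refine setIntegral_mono_ae_restrict (hKint x).integrableOn
          (((hIψx.const_mul C₀).const_mul _)) ?_
        filter_upwards [ae_restrict_of_ae hwae, ae_restrict_mem measurableSet_Ioc]
          with y h1 h2
        have h3 : ‖w y‖ = |V y| * ‖ψ y‖ := by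
          rw [h1, norm_neg, norm_mul, Complex.norm_real, Real.norm_eq_abs]
        have h4 : |V y| ≤ C₀ := by
          refine (hV_decay y).trans ?_
          calc C₀ * (1 + |y|) ^ (-β) ≤ C₀ * 1 :=
                mul_le_mul_of_nonneg_left (Real.rpow_le_one_of_one_le_of_nonpos
                  (by linarith [abs_nonneg y]) (by linarith)) hC₀.le
            _ = C₀ := mul_one _
        have h5 : |y - x|^3 ≤ (x₀ - a) ^ (3:ℕ) := by
          refine pow_le_pow_left₀ (abs_nonneg _) ?_ 3
          rw [abs_of_nonneg (by linarith [h2.1] : (0:ℝ) ≤ y - x)]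
          have := h2.2
          have := hx.1
          linarith
        rw [h3]
        refine mul_le_mul h5 (mul_le_mul_of_nonneg_right h4 (norm_nonneg _))
          (mul_nonneg (abs_nonneg _) (norm_nonneg _)) (pow_nonneg (by linarith) 3)
      calc 6⁻¹ * ∫ y in Ioc x x₀, |y - x|^3 * ‖w y‖
          ≤ 6⁻¹ * ∫ y in Ioc x x₀, (x₀ - a) ^ (3:ℕ) * (C₀ * ‖ψ y‖) :=
            mul_le_mul_of_nonneg_left hmono (by norm_num)
        _ = K * ∫ y in Ioc x x₀, ‖ψ y‖ := by
            rw [integral_const_mul, integral_const_mul, hK_def]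
            ring
    -- Gronwall iteration
    have grw : ∀ n : ℕ, ∀ x ∈ Icc a x₀, ‖ψ x‖ ≤ B * (K^n * (x₀ - x)^n / n.factorial) := by
      intro n
      induction n with
      | zero =>
        intro x hx
        simpa using hBb x hx
      | succ n ih =>
        intro x hx
        refine (key x hx).trans ?_
        have hIψx : IntegrableOn (fun y : ℝ => ‖ψ y‖) (Ioc x x₀) volume := by
          refine Measure.integrableOn_of_bounded (M := B) measure_Ioc_lt_top.ne
            hψm.norm.aestronglyMeasurable ?_
          filter_upwards [ae_restrict_mem measurableSet_Ioc] with y hy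
          rw [norm_norm]
          exact hBb y ⟨le_trans hx.1 hy.1.le, hy.2⟩
        have hcont : IntegrableOn (fun y : ℝ => B * (K^n * (x₀ - y)^n / n.factorial))
            (Ioc x x₀) volume := by
          apply Continuous.integrableOn_Ioc
          fun_prop
        have hmono2 : (∫ y in Ioc x x₀, ‖ψ y‖)
            ≤ ∫ y in Ioc x x₀, B * (K^n * (x₀ - y)^n / n.factorial) := by
          refine setIntegral_mono_on hIψx hcont measurableSet_Ioc (fun y hy => ?_)
          exact ih y ⟨le_trans hx.1 hy.1.le, hy.2⟩
        have hfac : (0:ℝ) < n.factorial := by exact_mod_cast n.factorial_pos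
        have hpoly : (∫ y in Ioc x x₀, (x₀ - y)^n) = (x₀ - x)^(n+1) / (n+1) := by
          rw [← intervalIntegral.integral_of_le hx.2,
            intervalIntegral.integral_comp_sub_left (fun u => u^n) x₀, sub_self,
            integral_pow]
          simp
        have hrw : (fun y : ℝ => B * (K^n * (x₀ - y)^n / n.factorial))
            = fun y : ℝ => (B * K^n / n.factorial) * (x₀ - y)^n := by
          funext y; ring
        calc K * ∫ y in Ioc x x₀, ‖ψ y‖
            ≤ K * ∫ y in Ioc x x₀, B * (K^n * (x₀ - y)^n / n.factorial) :=
              mul_le_mul_of_nonneg_left hmono2 hK0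
          _ = K * ((B * K^n / n.factorial) * ((x₀ - x)^(n+1) / (n+1))) := by
              rw [hrw, integral_const_mul, hpoly]
          _ = B * (K^(n+1) * (x₀ - x)^(n+1) / (n+1).factorial) := by
              rw [Nat.factorial_succ]
              push_cast
              field_simp
              ring
    have hfin : ψ a = 0 := by
      have hb : ∀ n : ℕ, ‖ψ a‖ ≤ B * ((K*(x₀-a))^n / n.factorial) := by
        intro n
        refine (grw n a ⟨le_refl a, hax.le⟩).trans (le_of_eq ?_)
        rw [mul_pow]
      have htend2 : Tendsto (fun n : ℕ => B * ((K*(x₀-a))^n / n.factorial)) atTop (nhds 0) := by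
        have h := (FloorSemiring.tendsto_pow_div_factorial_atTop (K*(x₀-a))).const_mul B
        simpa using h
      have h0 : ‖ψ a‖ ≤ 0 := ge_of_tendsto htend2 (Eventually.of_forall hb)
      exact norm_le_zero_iff.mp h0
    exact hfin
  -- conclusion
  filter_upwards [hgae] with x hx
  rw [hx, hψ_all x, mul_zero, neg_zero]
  rfl
end

section
/- Let V : ℝ → ℂ be measurable with ∫_ℝ (1+|y|)⁶ |V(y)| dy < ∞, and let φ : ℝ → ℂ be continuous with sup_{x∈ℝ} (1+|x|)^{−3} |φ(x)| < ∞ and φ(x) → 0 as x → +∞. If φ(x) = −(1/6) ∫_x^∞ (y−x)³ V(y) φ(y) dy for every x ∈ ℝ, then φ ≡ 0. -/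
open MeasureTheory Set Filter

/-- Volterra/Gronwall step in Lemma 3.4: if
`∫ (1+|y|)⁶ |V(y)| dy < ∞`, `φ` is continuous with `sup (1+|x|)^{-3}|φ(x)| < ∞` and
`φ(x) → 0` as `x → +∞`, and `φ(x) = −(1/6) ∫_x^∞ (y−x)³ V(y) φ(y) dy` for every `x`,
then `φ ≡ 0`. -/
theorem stmt15
    (V : ℝ → ℂ) (hV_meas : Measurable V)
    (hV_int : Integrable (fun y : ℝ => (1 + |y|) ^ 6 * ‖V y‖))
    (φ : ℝ → ℂ) (hφ_cont : Continuous φ)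
    (hφ_bound : ∃ M : ℝ, ∀ x : ℝ, ‖φ x‖ ≤ M * (1 + |x|) ^ 3)
    (hφ_lim : Tendsto φ atTop (nhds 0))
    (heq : ∀ x : ℝ, φ x =
      -(1/6 : ℂ) * ∫ y in Ioi x, (((y - x) ^ 3 : ℝ) : ℂ) * V y * φ y) :
    ∀ x : ℝ, φ x = 0 := by
  obtain ⟨M, hM⟩ := hφ_bound
  set w : ℝ → ℝ := fun y => (1 + |y|) ^ 6 * ‖V y‖ with hw
  have hw_nonneg : ∀ y, 0 ≤ w y := fun y => mul_nonneg (by positivity) (norm_nonneg _)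
  have hVnorm : Integrable (fun y : ℝ => ‖V y‖) := by
    refine hV_int.mono' hV_meas.norm.aestronglyMeasurable (ae_of_all _ fun y => ?_)
    rw [Real.norm_eq_abs, abs_of_nonneg (norm_nonneg _)]
    have h1 : (1:ℝ) ≤ (1 + |y|) ^ 6 := by
      have : (1:ℝ) ≤ 1 + |y| := by linarith [abs_nonneg y]
      calc (1:ℝ) = 1 ^ 6 := by norm_num
        _ ≤ (1 + |y|) ^ 6 := pow_le_pow_left₀ one_pos.le this 6
    show ‖V y‖ ≤ (1 + |y|) ^ 6 * ‖V y‖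
    nlinarith [norm_nonneg (V y)]
  set J : ℝ := ∫ y, ‖V y‖ with hJ
  have hJ0 : 0 ≤ J := integral_nonneg fun y => norm_nonneg _
  -- norm of the integrand
  have hnormf : ∀ x y : ℝ, x < y →
      ‖(((y - x) ^ 3 : ℝ) : ℂ) * V y * φ y‖ = (y - x) ^ 3 * (‖V y‖ * ‖φ y‖) := by
    intro x y hxy
    rw [norm_mul, norm_mul, Complex.norm_real, Real.norm_eq_abs,
      abs_of_nonneg (pow_nonneg (by linarith : (0:ℝ) ≤ y - x) 3), mul_assoc]
  have hnormphi : ∀ x : ℝ, ‖φ x‖ =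
      (1/6) * ‖∫ y in Ioi x, (((y - x) ^ 3 : ℝ) : ℂ) * V y * φ y‖ := by
    intro x
    rw [heq x, norm_mul]
    norm_num
  -- find a ≥ 0 with small tail
  obtain ⟨a, ha0, ha⟩ : ∃ a : ℝ, 0 ≤ a ∧ ∫ y in Ioi a, w y ≤ 3 := by
    have hmono : Monotone (fun n : ℕ => Iic ((n:ℝ))) := fun m n hmn =>
      Iic_subset_Iic.mpr (by exact_mod_cast hmn)
    have hunion : (⋃ n : ℕ, Iic ((n:ℝ))) = univ := by
      ext x
      simp only [mem_iUnion, mem_Iic, mem_univ, iff_true]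
      exact exists_nat_ge x
    have htend := tendsto_setIntegral_of_monotone (fun n => measurableSet_Iic) hmono
      (by rw [hunion]; exact hV_int.integrableOn)
    rw [hunion, setIntegral_univ] at htend
    obtain ⟨N, hN⟩ := (Metric.tendsto_atTop.mp htend 3 (by norm_num)) |>.imp
      (fun N hN => hN N le_rfl)
    rw [Real.dist_eq, abs_sub_lt_iff] at hN
    refine ⟨(N:ℝ), Nat.cast_nonneg N, ?_⟩
    have hadd := integral_add_compl (measurableSet_Iic : MeasurableSet (Iic ((N:ℝ)))) hV_int
    rw [compl_Iic] at hadd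
    linarith [hN.2]
  -- Step 1: φ = 0 on [a, ∞)
  have hden : ∀ x : ℝ, (0:ℝ) < (1 + |x|) ^ 3 := fun x => by positivity
  have hstep1 : ∀ x, a ≤ x → φ x = 0 := by
    set ψ : ℝ → ℝ := fun x => ‖φ x‖ / (1 + |x|) ^ 3 with hψ
    have hψM : ∀ x, ψ x ≤ M := fun x => by
      rw [hψ]; exact (div_le_iff₀ (hden x)).mpr (hM x)
    set S := sSup (ψ '' Ici a) with hS
    have hbdd : BddAbove (ψ '' Ici a) := ⟨M, by rintro r ⟨x, _, rfl⟩; exact hψM x⟩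
    have hne : (ψ '' Ici a).Nonempty := ⟨ψ a, a, le_refl a, rfl⟩
    have hle : ∀ x, a ≤ x → ψ x ≤ S := fun x hx => le_csSup hbdd ⟨x, hx, rfl⟩
    have hS0 : 0 ≤ S := le_trans (by positivity) (hle a le_rfl)
    have hφle : ∀ y, a ≤ y → ‖φ y‖ ≤ S * (1 + |y|) ^ 3 := fun y hy =>
      (div_le_iff₀ (hden y)).mp (hle y hy)
    have hkey : ∀ x, a ≤ x → ‖φ x‖ ≤ S / 2 := by
      intro x hx
      have hg_int : Integrable (fun y => S * w y) := hV_int.const_mul S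
      have hb : ‖∫ y in Ioi x, (((y - x) ^ 3 : ℝ) : ℂ) * V y * φ y‖
          ≤ ∫ y in Ioi x, S * w y := by
        refine norm_integral_le_of_norm_le hg_int.integrableOn ?_
        refine (ae_restrict_iff' measurableSet_Ioi).mpr (ae_of_all _ fun y hy => ?_)
        rw [hnormf x y hy]
        have hy1 : y - x ≤ 1 + |y| := by
          have : y ≤ |y| := le_abs_self y
          have hxa : 0 ≤ x := le_trans ha0 hx
          linarith
        have h2 : (y - x) ^ 3 ≤ (1 + |y|) ^ 3 :=
          pow_le_pow_left₀ (by linarith [hy.out] : (0:ℝ) ≤ y - x) hy1 3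
        have h3 : ‖φ y‖ ≤ S * (1 + |y|) ^ 3 := hφle y (le_trans hx (le_of_lt hy))
        calc (y - x) ^ 3 * (‖V y‖ * ‖φ y‖)
            ≤ (1 + |y|) ^ 3 * (‖V y‖ * (S * (1 + |y|) ^ 3)) := by
              gcongr
          _ = S * w y := by rw [hw]; ring
      have hmonoset : ∫ y in Ioi x, S * w y ≤ ∫ y in Ioi a, S * w y := by
        refine setIntegral_mono_set hg_int.integrableOn ?_ ?_
        · exact ae_of_all _ fun y => mul_nonneg hS0 (hw_nonneg y)
        · exact HasSubset.Subset.eventuallyLE (Ioi_subset_Ioi hx)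
      have hval : ∫ y in Ioi a, S * w y ≤ S * 3 := by
        rw [integral_const_mul]
        exact mul_le_mul_of_nonneg_left ha hS0
      have := hnormphi x
      rw [this]
      linarith
    have hS2 : S ≤ S / 2 := by
      refine csSup_le hne ?_
      rintro r ⟨x, hx, rfl⟩
      have h1 : (1:ℝ) ≤ (1 + |x|) ^ 3 := by
        calc (1:ℝ) = 1 ^ 3 := by norm_num
          _ ≤ (1 + |x|) ^ 3 := pow_le_pow_left₀ one_pos.le (by linarith [abs_nonneg x]) 3
      calc ψ x ≤ ‖φ x‖ := div_le_self (norm_nonneg _) h1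
        _ ≤ S / 2 := hkey x hx
    have hSz : S = 0 := by linarith
    intro x hx
    have := hkey x hx
    rw [hSz] at this
    exact norm_le_zero_iff.mp (by linarith)
  -- Step 2: propagate to the left
  set h : ℝ := min 1 (1 / (1 + J)) with hh
  have hhpos : 0 < h := lt_min one_pos (by positivity)
  have hh1 : h ≤ 1 := min_le_left _ _
  have hhJ : h ^ 3 * J ≤ 1 := by
    have h1 : h ≤ 1 / (1 + J) := min_le_right _ _
    have h2 : h ^ 3 ≤ h := by
      calc h ^ 3 ≤ 1 ^ 2 * h := by
            have := pow_le_pow_left₀ hhpos.le hh1 2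
            nlinarith [hhpos.le]
        _ = h := by ring
    have h3 : h * J ≤ (1 / (1 + J)) * J := mul_le_mul_of_nonneg_right h1 hJ0
    have h4 : (1 / (1 + J)) * J ≤ 1 := by
      rw [div_mul_eq_mul_div, one_mul]
      exact div_le_one_of_le₀ (by linarith) (by positivity)
    nlinarith [mul_le_mul_of_nonneg_right h2 hJ0]
  have hind : ∀ n : ℕ, ∀ x, a - n * h ≤ x → φ x = 0 := by
    intro n
    induction n with
    | zero => intro x hx; exact hstep1 x (by simpa using hx)
    | succ n ih =>
      intro x hx
      set c : ℝ := a - n * h with hc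
      set b : ℝ := a - (n + 1 : ℕ) * h with hb
      by_cases hxc : c ≤ x
      · exact ih x hxc
      push_neg at hxc
      have hcb : c - b = h := by rw [hc, hb]; push_cast; ring
      have hbc : b ≤ c := by linarith
      have hxIcc : x ∈ Icc b c := ⟨hx, hxc.le⟩
      set T := sSup ((fun y => ‖φ y‖) '' Icc b c) with hT
      have hbdd : BddAbove ((fun y => ‖φ y‖) '' Icc b c) :=
        (isCompact_Icc.image_of_continuousOn hφ_cont.norm.continuousOn).bddAbove
      have hne : ((fun y => ‖φ y‖) '' Icc b c).Nonempty := ⟨‖φ b‖, b, ⟨le_rfl, hbc⟩, rfl⟩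
      have hleT : ∀ y ∈ Icc b c, ‖φ y‖ ≤ T := fun y hy => le_csSup hbdd ⟨y, hy, rfl⟩
      have hT0 : 0 ≤ T := le_trans (norm_nonneg _) (hleT b ⟨le_rfl, hbc⟩)
      have hkey : ∀ z ∈ Icc b c, ‖φ z‖ ≤ T / 2 := by
        intro z hz
        have hcongr : (∫ y in Ioi z, (((y - z) ^ 3 : ℝ) : ℂ) * V y * φ y)
            = ∫ y in Ioc z c, (((y - z) ^ 3 : ℝ) : ℂ) * V y * φ y := by
          have hpt : EqOn (fun y => (((y - z) ^ 3 : ℝ) : ℂ) * V y * φ y)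
              ((Ioc z c).indicator (fun y => (((y - z) ^ 3 : ℝ) : ℂ) * V y * φ y))
              (Ioi z) := by
            intro y hy
            by_cases hyc : y ≤ c
            · rw [indicator_of_mem (mem_Ioc.mpr ⟨hy, hyc⟩)]
            · rw [indicator_of_notMem (fun hmem => hyc hmem.2)]
              simp only [ih y (not_le.mp hyc).le, mul_zero]
          rw [setIntegral_congr_fun measurableSet_Ioi hpt,
            integral_indicator measurableSet_Ioc,
            Measure.restrict_restrict measurableSet_Ioc,
            inter_eq_left.mpr Ioc_subset_Ioi_self]
        have hg_int : Integrable (fun y : ℝ => h ^ 3 * T * ‖V y‖) := hVnorm.const_mul _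
        have hb2 : ‖∫ y in Ioc z c, (((y - z) ^ 3 : ℝ) : ℂ) * V y * φ y‖
            ≤ ∫ y in Ioc z c, h ^ 3 * T * ‖V y‖ := by
          refine norm_integral_le_of_norm_le hg_int.integrableOn ?_
          refine (ae_restrict_iff' measurableSet_Ioc).mpr (ae_of_all _ fun y hy => ?_)
          rw [hnormf z y hy.1]
          have hyh : y - z ≤ h := by
            have := hz.1
            have := hy.2
            linarith
          have h2 : (y - z) ^ 3 ≤ h ^ 3 :=
            pow_le_pow_left₀ (by linarith [hy.1] : (0:ℝ) ≤ y - z) hyh 3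
          have h3 : ‖φ y‖ ≤ T := hleT y ⟨le_trans hz.1 hy.1.le, hy.2⟩
          calc (y - z) ^ 3 * (‖V y‖ * ‖φ y‖)
              ≤ h ^ 3 * (‖V y‖ * T) := by gcongr
            _ = h ^ 3 * T * ‖V y‖ := by ring
        have hvi : ∫ y in Ioc z c, h ^ 3 * T * ‖V y‖ ≤ h ^ 3 * T * J := by
          calc ∫ y in Ioc z c, h ^ 3 * T * ‖V y‖
              ≤ ∫ y, h ^ 3 * T * ‖V y‖ := setIntegral_le_integral hg_int
                (ae_of_all _ fun y => by positivity)
            _ = h ^ 3 * T * J := by rw [integral_const_mul, hJ]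
        rw [hnormphi z, hcongr]
        have hTT : (1/6 : ℝ) * (h ^ 3 * T * J) ≤ T / 2 := by
          nlinarith [mul_nonneg hT0 (sub_nonneg.mpr hhJ)]
        calc (1/6 : ℝ) * ‖∫ y in Ioc z c, (((y - z) ^ 3 : ℝ) : ℂ) * V y * φ y‖
            ≤ (1/6 : ℝ) * (h ^ 3 * T * J) := by
              have := le_trans hb2 hvi
              linarith
          _ ≤ T / 2 := hTT
      have hT2 : T ≤ T / 2 := by
        refine csSup_le hne ?_
        rintro r ⟨y, hy, rfl⟩
        exact hkey y hy
      have hTz : T = 0 := by linarith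
      have := hleT x hxIcc
      rw [hTz] at this
      exact norm_le_zero_iff.mp this
  intro x
  obtain ⟨n, hn⟩ := exists_nat_ge ((a - x) / h)
  exact hind n x (by
    have := (div_le_iff₀ hhpos).mp hn
    linarith)
end
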